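/- arXiv:0901.3104 — 6 statements merged into one kernel-verified Lean document; each statement's English description precedes it below -/
import Mathlib

section
/- The rule π^q(σ_{i,i+1}) g(u_1,...,u_n) = ((q^{-1}u_{i+1} - q u_i)/(q u_{i+1} - q^{-1} u_i)) · g(u_1,...,u_{i+1},u_i,...,u_n), defined on the elementary transpositions σ_{i,i+1}, extends to a well-defined action of the symmetric group S_n on rational functions of u_1,...,u_n, i.e., the operators π^q(σ_{i,i+1}) satisfy the braid relations and the involution relation π^q(σ_{i,i+1})² = id. -/
/-- The operator `π^q(σ_{i,i+1})` acting on functions of `u_1, ..., u_n`: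
`(π^q(σ_{i,i+1}) g)(u) = ((q⁻¹ u_{i+1} - q u_i)/(q u_{i+1} - q⁻¹ u_i)) · g(..., u_{i+1}, u_i, ...)`. -/
noncomputable def piQ (n : ℕ) (q : ℂ) (i : ℕ) (g : (Fin n → ℂ) → ℂ) : (Fin n → ℂ) → ℂ :=
  fun u =>
    if h : i + 1 < n then
      ((q⁻¹ * u ⟨i + 1, h⟩ - q * u ⟨i, Nat.lt_of_succ_lt h⟩) /
          (q * u ⟨i + 1, h⟩ - q⁻¹ * u ⟨i, Nat.lt_of_succ_lt h⟩)) *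
        g (u ∘ ⇑(Equiv.swap (⟨i, Nat.lt_of_succ_lt h⟩ : Fin n) ⟨i + 1, h⟩))
    else g u

/-- Swaps of disjoint pairs commute (pointwise). -/
theorem swap_commute_aux {α : Type*} [DecidableEq α] {a b c d : α}
    (nac : a ≠ c) (nad : a ≠ d) (nbc : b ≠ c) (nbd : b ≠ d) (x : α) :
    Equiv.swap a b (Equiv.swap c d x) = Equiv.swap c d (Equiv.swap a b x) := by
  simp only [Equiv.swap_apply_def]
  split_ifs <;> simp_all

/-- Braid relation for transpositions (pointwise). -/
theorem swap_braid_aux {α : Type*} [DecidableEq α] {a b c : α}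
    (nab : a ≠ b) (nac : a ≠ c) (nbc : b ≠ c) (x : α) :
    Equiv.swap a b (Equiv.swap b c (Equiv.swap a b x)) =
      Equiv.swap b c (Equiv.swap a b (Equiv.swap b c x)) := by
  rcases eq_or_ne x a with rfl | hxa
  · simp [Equiv.swap_apply_of_ne_of_ne, nab, nac, nbc, nac.symm, nbc.symm]
  rcases eq_or_ne x b with rfl | hxb
  · simp [Equiv.swap_apply_of_ne_of_ne, nab, nac, nbc, nac.symm, nbc.symm]
  rcases eq_or_ne x c with rfl | hxc
  · simp [Equiv.swap_apply_of_ne_of_ne, nab, nac, nbc, nac.symm, nbc.symm]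
  simp [Equiv.swap_apply_of_ne_of_ne, hxa, hxb, hxc]

/-- The rule `π^q(σ_{i,i+1})` extends to a well-defined action of the symmetric group `S_n`
on rational functions of `u_1,...,u_n`: at every generic point the operators
`π^q(σ_{i,i+1})` satisfy the involution relation, the braid relations, and the
commutation relations for distant transpositions. -/
theorem piQ_is_action (n : ℕ) (q : ℂ) (hq : q ≠ 0) (hq2 : q ^ 2 ≠ 1)
    (g : (Fin n → ℂ) → ℂ) (u : Fin n → ℂ)
    (hgen : ∀ j k : Fin n, j ≠ k → q * u j - q⁻¹ * u k ≠ 0) :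
    (∀ i : ℕ, i + 1 < n → piQ n q i (piQ n q i g) u = g u) ∧
    (∀ i : ℕ, i + 2 < n →
      piQ n q i (piQ n q (i + 1) (piQ n q i g)) u =
        piQ n q (i + 1) (piQ n q i (piQ n q (i + 1) g)) u) ∧
    (∀ i j : ℕ, i + 1 < n → j + 1 < n → i + 1 < j →
      piQ n q i (piQ n q j g) u = piQ n q j (piQ n q i g) u) := by
  refine ⟨?_, ?_, ?_⟩
  · -- involution
    intro i h
    simp only [piQ, dif_pos h]
    set a : Fin n := ⟨i, Nat.lt_of_succ_lt h⟩
    set b : Fin n := ⟨i + 1, h⟩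
    have hab : a ≠ b := by simp [a, b, Fin.ext_iff]
    have h1 : (u ∘ ⇑(Equiv.swap a b)) ∘ ⇑(Equiv.swap a b) = u := by
      ext x; simp
    have h2 : (u ∘ ⇑(Equiv.swap a b)) b = u a := by simp
    have h3 : (u ∘ ⇑(Equiv.swap a b)) a = u b := by simp
    rw [h1, h2, h3]
    have d1 := hgen b a hab.symm
    have d2 := hgen a b hab
    have key : (q⁻¹ * u b - q * u a) / (q * u b - q⁻¹ * u a) *
        ((q⁻¹ * u a - q * u b) / (q * u a - q⁻¹ * u b)) = 1 := by
      rw [div_mul_div_comm, div_eq_one_iff_eq (mul_ne_zero d1 d2)]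
      ring
    rw [← mul_assoc, key, one_mul]
  · -- braid
    intro i h
    have h1 : i + 1 < n := by omega
    have h2 : i + 1 + 1 < n := by omega
    simp only [piQ, dif_pos h1, dif_pos h2]
    set a : Fin n := ⟨i, Nat.lt_of_succ_lt h1⟩ with ha
    set b : Fin n := ⟨i + 1, h1⟩ with hb
    set c : Fin n := ⟨i + 1 + 1, h2⟩ with hc
    have nab : a ≠ b := Fin.ne_of_val_ne (by simp [ha, hb])
    have nac : a ≠ c := Fin.ne_of_val_ne (by simp [ha, hc]; omega)
    have nbc : b ≠ c := Fin.ne_of_val_ne (by simp [hb, hc])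
    set s1 : Equiv.Perm (Fin n) := Equiv.swap a b with hs1
    set s2 : Equiv.Perm (Fin n) := Equiv.swap b c with hs2
    have E1 : (u ∘ ⇑s1) b = u a := by simp [hs1]
    have E2 : (u ∘ ⇑s1) c = u c := by
      simp [hs1, Equiv.swap_apply_of_ne_of_ne nac.symm nbc.symm]
    have E3 : ((u ∘ ⇑s1) ∘ ⇑s2) a = u b := by
      simp [hs1, hs2, Equiv.swap_apply_of_ne_of_ne nab nac]
    have E4 : ((u ∘ ⇑s1) ∘ ⇑s2) b = u c := by
      simp [hs1, hs2, Equiv.swap_apply_of_ne_of_ne nac.symm nbc.symm]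
    have F1 : (u ∘ ⇑s2) a = u a := by
      simp [hs2, Equiv.swap_apply_of_ne_of_ne nab nac]
    have F2 : (u ∘ ⇑s2) b = u c := by simp [hs2]
    have F3 : ((u ∘ ⇑s2) ∘ ⇑s1) b = u a := by
      simp [hs1, hs2, Equiv.swap_apply_of_ne_of_ne nab nac]
    have F4 : ((u ∘ ⇑s2) ∘ ⇑s1) c = u b := by
      simp [hs1, hs2, Equiv.swap_apply_of_ne_of_ne nac.symm nbc.symm]
    have G : ((u ∘ ⇑s1) ∘ ⇑s2) ∘ ⇑s1 = ((u ∘ ⇑s2) ∘ ⇑s1) ∘ ⇑s2 := by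
      ext x
      simp only [Function.comp_apply, hs1, hs2]
      rw [swap_braid_aux nab nac nbc]
    rw [E1, E2, E3, E4, F1, F2, F3, F4, G]
    ring
  · -- commutation
    intro i j hi hj hij
    simp only [piQ, dif_pos hi, dif_pos hj]
    set a : Fin n := ⟨i, Nat.lt_of_succ_lt hi⟩ with ha
    set b : Fin n := ⟨i + 1, hi⟩ with hb
    set c : Fin n := ⟨j, Nat.lt_of_succ_lt hj⟩ with hc
    set d : Fin n := ⟨j + 1, hj⟩ with hd
    have nac : a ≠ c := Fin.ne_of_val_ne (by simp [ha, hc]; omega)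
    have nad : a ≠ d := Fin.ne_of_val_ne (by simp [ha, hd]; omega)
    have nbc : b ≠ c := Fin.ne_of_val_ne (by simp [hb, hc]; omega)
    have nbd : b ≠ d := Fin.ne_of_val_ne (by simp [hb, hd]; omega)
    have e1 : (u ∘ ⇑(Equiv.swap a b)) c = u c := by
      rw [Function.comp_apply, Equiv.swap_apply_of_ne_of_ne nac.symm nbc.symm]
    have e2 : (u ∘ ⇑(Equiv.swap a b)) d = u d := by
      rw [Function.comp_apply, Equiv.swap_apply_of_ne_of_ne nad.symm nbd.symm]
    have e3 : (u ∘ ⇑(Equiv.swap c d)) a = u a := by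
      rw [Function.comp_apply, Equiv.swap_apply_of_ne_of_ne nac nad]
    have e4 : (u ∘ ⇑(Equiv.swap c d)) b = u b := by
      rw [Function.comp_apply, Equiv.swap_apply_of_ne_of_ne nbc nbd]
    have e5 : (u ∘ ⇑(Equiv.swap a b)) ∘ ⇑(Equiv.swap c d) =
        (u ∘ ⇑(Equiv.swap c d)) ∘ ⇑(Equiv.swap a b) := by
      ext x
      simp only [Function.comp_apply]
      rw [swap_commute_aux nac nad nbc nbd]
    rw [e1, e2, e3, e4, e5]
    ring
end

section
/- If g(u_1,...,u_n) is q-symmetric, i.e. invariant under the action π^q of S_n defined by π^q(σ_{i,i+1})g(u) = ((q^{-1}u_{i+1}-qu_i)/(qu_{i+1}-q^{-1}u_i)) g(...,u_{i+1},u_i,...), then the function ∏_{k>j} ((qu_k - q^{-1}u_j)/(u_k - u_j)) · g(u_1,...,u_n) is symmetric under all permutations of u_1,...,u_n. -/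
/-- The prefactor `∏_{k>j} (q u_k - q⁻¹ u_j)/(u_k - u_j)`. -/
noncomputable def qSymFactor (n : ℕ) (q : ℂ) (u : Fin n → ℂ) : ℂ :=
  ∏ p ∈ Finset.univ.filter (fun p : Fin n × Fin n => p.1 < p.2),
    (q * u p.2 - q⁻¹ * u p.1) / (u p.2 - u p.1)

section aux

variable {n : ℕ} {q : ℂ}

/-- Ordering behavior of an adjacent swap. -/
lemma adj_swap_lt {i : ℕ} (h : i + 1 < n) (a b : Fin n) :
    Equiv.swap (⟨i, Nat.lt_of_succ_lt h⟩ : Fin n) ⟨i + 1, h⟩ a <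
      Equiv.swap (⟨i, Nat.lt_of_succ_lt h⟩ : Fin n) ⟨i + 1, h⟩ b ↔
    ((a = ⟨i + 1, h⟩ ∧ b = ⟨i, Nat.lt_of_succ_lt h⟩) ∨
      (a < b ∧ ¬(a = ⟨i, Nat.lt_of_succ_lt h⟩ ∧ b = ⟨i + 1, h⟩))) := by
  have hsw : ∀ x : Fin n,
      ((Equiv.swap (⟨i, Nat.lt_of_succ_lt h⟩ : Fin n) ⟨i + 1, h⟩ x : Fin n) : ℕ) =
        if (x : ℕ) = i then i + 1 else if (x : ℕ) = i + 1 then i else x := by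
    intro x
    rcases eq_or_ne (x : ℕ) i with hx | hx
    · have : x = (⟨i, Nat.lt_of_succ_lt h⟩ : Fin n) := Fin.ext hx
      subst this; simp
    · rcases eq_or_ne (x : ℕ) (i + 1) with hx' | hx'
      · have : x = (⟨i + 1, h⟩ : Fin n) := Fin.ext hx'
        subst this; simp
      · rw [Equiv.swap_apply_of_ne_of_ne (by simp [Fin.ext_iff, hx]) (by simp [Fin.ext_iff, hx'])]
        simp [hx, hx']
  simp only [Fin.lt_def, hsw, Fin.ext_iff]
  split_ifs <;> omega

/-- How the prefactor changes under an adjacent swap. -/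
lemma qSymFactor_adj_swap {i : ℕ} (h : i + 1 < n) (u : Fin n → ℂ)
    (hu : ∀ j k : Fin n, j ≠ k → u j ≠ u k ∧ q * u j - q⁻¹ * u k ≠ 0) :
    qSymFactor n q (u ∘ ⇑(Equiv.swap (⟨i, Nat.lt_of_succ_lt h⟩ : Fin n) ⟨i + 1, h⟩)) =
      qSymFactor n q u *
        ((q * u ⟨i, Nat.lt_of_succ_lt h⟩ - q⁻¹ * u ⟨i + 1, h⟩) /
          (u ⟨i, Nat.lt_of_succ_lt h⟩ - u ⟨i + 1, h⟩)) /
        ((q * u ⟨i + 1, h⟩ - q⁻¹ * u ⟨i, Nat.lt_of_succ_lt h⟩) /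
          (u ⟨i + 1, h⟩ - u ⟨i, Nat.lt_of_succ_lt h⟩)) := by
  classical
  set I : Fin n := ⟨i, Nat.lt_of_succ_lt h⟩ with hI
  set J : Fin n := ⟨i + 1, h⟩ with hJ
  have hIJ : I ≠ J := by simp [hI, hJ, Fin.ext_iff]
  set s : Equiv.Perm (Fin n) := Equiv.swap I J with hs
  set F : Fin n × Fin n → ℂ := fun p => (q * u p.2 - q⁻¹ * u p.1) / (u p.2 - u p.1) with hF
  set P : Finset (Fin n × Fin n) := Finset.univ.filter (fun p : Fin n × Fin n => p.1 < p.2)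
    with hP
  have e_inj : ∀ a ∈ P, ∀ b ∈ P,
      (fun p : Fin n × Fin n => (s p.1, s p.2)) a =
        (fun p : Fin n × Fin n => (s p.1, s p.2)) b → a = b := by
    intro a _ b _ hab
    simp only [Prod.mk.injEq] at hab
    exact Prod.ext (s.injective hab.1) (s.injective hab.2)
  have key : qSymFactor n q (u ∘ ⇑s) = ∏ p ∈ P.image (fun p => (s p.1, s p.2)), F p := by
    rw [Finset.prod_image e_inj]
    rfl
  have hmem : ∀ p : Fin n × Fin n,
      p ∈ P.image (fun p : Fin n × Fin n => (s p.1, s p.2)) ↔ s p.1 < s p.2 := by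
    intro p
    simp only [Finset.mem_image, Finset.mem_filter, Finset.mem_univ, true_and, hP]
    constructor
    · rintro ⟨a, ha, rfl⟩
      simpa [hs, Equiv.swap_apply_self] using ha
    · intro hp
      exact ⟨(s p.1, s p.2), hp, by simp [hs, Equiv.swap_apply_self]⟩
  have himg : P.image (fun p : Fin n × Fin n => (s p.1, s p.2)) =
      insert (J, I) (P.erase (I, J)) := by
    ext p
    rw [hmem p, hs, hI, hJ, adj_swap_lt h p.1 p.2]
    simp only [Finset.mem_insert, Finset.mem_erase, hP, Finset.mem_filter, Finset.mem_univ,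
      true_and, ← hI, ← hJ]
    constructor
    · rintro (⟨h1, h2⟩ | ⟨hlt, hne⟩)
      · exact Or.inl (Prod.ext h1 h2)
      · exact Or.inr ⟨fun hpe => hne ⟨by rw [hpe], by rw [hpe]⟩, hlt⟩
    · rintro (rfl | ⟨hne, hlt⟩)
      · exact Or.inl ⟨rfl, rfl⟩
      · exact Or.inr ⟨hlt, fun hc => hne (Prod.ext hc.1 hc.2)⟩
  have hJInotmem : (J, I) ∉ P.erase (I, J) := by
    simp only [Finset.mem_erase, hP, Finset.mem_filter, Finset.mem_univ, true_and]
    rintro ⟨-, hlt⟩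
    exact absurd hlt (by simp [hI, hJ, Fin.lt_def])
  have hIJmem : (I, J) ∈ P := by
    simp only [hP, Finset.mem_filter, Finset.mem_univ, true_and]
    simp [hI, hJ, Fin.lt_def]
  have expand1 : qSymFactor n q (u ∘ ⇑s) = F (J, I) * ∏ p ∈ P.erase (I, J), F p := by
    rw [key, himg, Finset.prod_insert hJInotmem]
  have expand2 : qSymFactor n q u = F (I, J) * ∏ p ∈ P.erase (I, J), F p :=
    (Finset.mul_prod_erase P F hIJmem).symm
  have hFIJ : F (I, J) ≠ 0 := by
    refine div_ne_zero (hu J I hIJ.symm).2 (sub_ne_zero.2 (hu J I hIJ.symm).1)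
  rw [expand1, expand2]
  have hFJI : F (J, I) = (q * u I - q⁻¹ * u J) / (u I - u J) := rfl
  have hFIJ' : F (I, J) = (q * u J - q⁻¹ * u I) / (u J - u I) := rfl
  rw [← hFJI, ← hFIJ', eq_div_iff hFIJ]
  ring

/-- Abstract cancellation identity. -/
lemma cancel_aux (S G X Y c : ℂ) (hX : X ≠ 0) (hY : Y ≠ 0) (hc : c ≠ 0) :
    S * (X / c) / (Y / (-c)) * ((-Y) / X * G) = S * G := by
  field_simp

/-- The full expression is invariant under an adjacent swap. -/
lemma step_adj (hq : q ≠ 0) (g : (Fin n → ℂ) → ℂ)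
    (hg : ∀ (i : ℕ) (h : i + 1 < n) (u : Fin n → ℂ),
      (∀ j k : Fin n, j ≠ k → u j ≠ u k ∧ q * u j - q⁻¹ * u k ≠ 0) →
      g u = ((q⁻¹ * u ⟨i + 1, h⟩ - q * u ⟨i, Nat.lt_of_succ_lt h⟩) /
              (q * u ⟨i + 1, h⟩ - q⁻¹ * u ⟨i, Nat.lt_of_succ_lt h⟩)) *
            g (u ∘ ⇑(Equiv.swap (⟨i, Nat.lt_of_succ_lt h⟩ : Fin n) ⟨i + 1, h⟩)))
    {i : ℕ} (h : i + 1 < n) (u : Fin n → ℂ)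
    (hu : ∀ j k : Fin n, j ≠ k → u j ≠ u k ∧ q * u j - q⁻¹ * u k ≠ 0) :
    qSymFactor n q (u ∘ ⇑(Equiv.swap (⟨i, Nat.lt_of_succ_lt h⟩ : Fin n) ⟨i + 1, h⟩)) *
      g (u ∘ ⇑(Equiv.swap (⟨i, Nat.lt_of_succ_lt h⟩ : Fin n) ⟨i + 1, h⟩)) =
    qSymFactor n q u * g u := by
  set I : Fin n := ⟨i, Nat.lt_of_succ_lt h⟩ with hI
  set J : Fin n := ⟨i + 1, h⟩ with hJ
  have hIJ : I ≠ J := by simp [hI, hJ, Fin.ext_iff]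
  set s : Equiv.Perm (Fin n) := Equiv.swap I J with hs
  have hu' : ∀ j k : Fin n, j ≠ k →
      (u ∘ ⇑s) j ≠ (u ∘ ⇑s) k ∧ q * (u ∘ ⇑s) j - q⁻¹ * (u ∘ ⇑s) k ≠ 0 := by
    intro j k hjk
    exact hu (s j) (s k) (s.injective.ne hjk)
  have hcomp : (u ∘ ⇑s) ∘ ⇑s = u := by
    funext x
    simp [hs, Equiv.swap_apply_self]
  have hgs := hg i h (u ∘ ⇑s) hu'
  rw [hcomp] at hgs
  have hsI : s I = J := Equiv.swap_apply_left I J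
  have hsJ : s J = I := Equiv.swap_apply_right I J
  have hgs' : g (u ∘ ⇑s) =
      ((q⁻¹ * u I - q * u J) / (q * u I - q⁻¹ * u J)) * g u := by
    rw [hgs]
    simp only [Function.comp_apply, ← hI, ← hJ, hsI, hsJ]
  rw [hgs', qSymFactor_adj_swap h u hu]
  have h1 : u I - u J ≠ 0 := sub_ne_zero.2 (hu I J hIJ).1
  have h2 : q * u J - q⁻¹ * u I ≠ 0 := (hu J I hIJ.symm).2
  have h3 : q * u I - q⁻¹ * u J ≠ 0 := (hu I J hIJ).2
  simp only [← hI, ← hJ]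
  have e1 : q⁻¹ * u I - q * u J = -(q * u J - q⁻¹ * u I) := by ring
  have e2 : u J - u I = -(u I - u J) := by ring
  rw [e1, e2]
  exact cancel_aux (qSymFactor n q u) (g u) _ _ _ h3 h2 h1

end aux

/-- main -/
theorem qsym_implies_symmetric (n : ℕ) (q : ℂ) (hq : q ≠ 0) (hq2 : q ^ 2 ≠ 1)
    (g : (Fin n → ℂ) → ℂ)
    (hg : ∀ (i : ℕ) (h : i + 1 < n) (u : Fin n → ℂ),
      (∀ j k : Fin n, j ≠ k → u j ≠ u k ∧ q * u j - q⁻¹ * u k ≠ 0) →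
      g u = ((q⁻¹ * u ⟨i + 1, h⟩ - q * u ⟨i, Nat.lt_of_succ_lt h⟩) /
              (q * u ⟨i + 1, h⟩ - q⁻¹ * u ⟨i, Nat.lt_of_succ_lt h⟩)) *
            g (u ∘ ⇑(Equiv.swap (⟨i, Nat.lt_of_succ_lt h⟩ : Fin n) ⟨i + 1, h⟩))) :
    ∀ (σ : Equiv.Perm (Fin n)) (u : Fin n → ℂ),
      (∀ j k : Fin n, j ≠ k → u j ≠ u k ∧ q * u j - q⁻¹ * u k ≠ 0) →
      qSymFactor n q (u ∘ ⇑σ) * g (u ∘ ⇑σ) = qSymFactor n q u * g u := by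
  intro σ u hu
  cases n with
  | zero =>
    have : u ∘ ⇑σ = u := funext fun x => x.elim0
    rw [this]
  | succ m =>
    have hσ : σ ∈ Submonoid.closure
        (Set.range fun i : Fin m => Equiv.swap i.castSucc i.succ) := by
      rw [Equiv.Perm.mclosure_swap_castSucc_succ m]; trivial
    induction hσ using Submonoid.closure_induction generalizing u with
    | one =>
      have : u ∘ ⇑(1 : Equiv.Perm (Fin (m + 1))) = u := rfl
      rw [this]
    | mem x hx =>
      obtain ⟨i, rfl⟩ := hx
      have hlt : (i : ℕ) + 1 < m + 1 := by omega
      have hcast : Equiv.swap i.castSucc i.succ =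
          Equiv.swap (⟨(i : ℕ), Nat.lt_of_succ_lt hlt⟩ : Fin (m + 1)) ⟨(i : ℕ) + 1, hlt⟩ := by
        congr 1 <;> exact Fin.ext (by simp)
      beta_reduce
      rw [hcast]
      exact step_adj hq g hg hlt u hu
    | mul x y hx hy ihx ihy =>
      have hcomp : u ∘ ⇑(x * y) = (u ∘ ⇑x) ∘ ⇑y := rfl
      have hux : ∀ j k : Fin (m + 1), j ≠ k →
          (u ∘ ⇑x) j ≠ (u ∘ ⇑x) k ∧ q * (u ∘ ⇑x) j - q⁻¹ * (u ∘ ⇑x) k ≠ 0 :=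
        fun j k hjk => hu (x j) (x k) (x.injective.ne hjk)
      rw [hcomp, ihy (u ∘ ⇑x) hux, ihx u hu]
end

section
/- Let P₁, P₂ ∈ Θ_n(χ) with χ(1) = (-1)^n and χ(τ) = (-1)^n e^{2πiα}, and let u_1,...,u_n be points with u_i - u_j ∉ Γ for i ≠ j and Σ_k u_k - α ∉ Γ. If P₁(u_i) = P₂(u_i) for all i = 1,...,n, then P₁ = P₂ identically. -/
open Complex Filter Metric Topology

set_option maxHeartbeats 1000000

noncomputable section

namespace ThetaHelp

/-- `ee z = exp (2πi z)` -/
def ee (z : ℂ) : ℂ := Complex.exp (2 * (Real.pi : ℂ) * Complex.I * z)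

lemma ee_ne_zero (z : ℂ) : ee z ≠ 0 := Complex.exp_ne_zero _

lemma two_pi_I_ne_zero : (2 * (Real.pi : ℂ) * Complex.I) ≠ 0 := by
  simp [Real.pi_ne_zero, Complex.I_ne_zero, Complex.ofReal_ne_zero]

lemma ee_add (z w : ℂ) : ee (z + w) = ee z * ee w := by
  rw [ee, ee, ee, ← Complex.exp_add]; congr 1; ring

lemma ee_zero : ee 0 = 1 := by simp [ee]

lemma ee_one : ee 1 = 1 := by
  rw [ee, mul_one, Complex.exp_two_pi_mul_I]

lemma ee_mul_neg (z : ℂ) : ee z * ee (-z) = 1 := by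
  rw [← ee_add]; simp [ee_zero]

lemma ee_nat (k : ℕ) (z : ℂ) : ee ((k : ℂ) * z) = ee z ^ k := by
  rw [ee, ee, ← Complex.exp_nat_mul]; congr 1; ring

lemma ee_eq_one_iff (z : ℂ) : ee z = 1 ↔ ∃ m : ℤ, z = (m : ℂ) := by
  rw [ee, Complex.exp_eq_one_iff]
  constructor
  · rintro ⟨m, hm⟩
    refine ⟨m, mul_left_cancel₀ Complex.two_pi_I_ne_zero ?_⟩
    linear_combination hm
  · rintro ⟨m, rfl⟩
    exact ⟨m, by ring⟩

lemma ee_norm (z : ℂ) : ‖ee z‖ = Real.exp (-(2 * Real.pi * z.im)) := by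
  rw [ee, Complex.norm_exp]
  congr 1
  simp [Complex.mul_re, Complex.mul_im]

lemma ee_norm_le (z : ℂ) : ‖ee z‖ ≤ Real.exp (2 * Real.pi * ‖z‖) := by
  rw [ee_norm]
  apply Real.exp_le_exp.mpr
  have h1 : |z.im| ≤ ‖z‖ := by exact Complex.abs_im_le_norm z
  have h2 : (0:ℝ) ≤ 2 * Real.pi := by positivity
  nlinarith [neg_abs_le z.im, abs_nonneg z.im]

lemma ee_hasDerivAt (z : ℂ) :
    HasDerivAt ee (ee z * (2 * (Real.pi : ℂ) * Complex.I)) z := by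
  have h := ((hasDerivAt_id z).const_mul (2 * (Real.pi : ℂ) * Complex.I)).cexp
  have h2 : HasDerivAt (fun x => ee x) (ee z * (2 * (Real.pi : ℂ) * Complex.I)) z := by
    simpa [ee] using h
  exact h2

lemma ee_differentiable : Differentiable ℂ ee := fun z => (ee_hasDerivAt z).differentiableAt

lemma hasProd_zero_of_exists_eq_zero {b : ℕ → ℂ} (h : ∃ j, b j = 0) : HasProd b 0 := by
  obtain ⟨j, hj⟩ := h
  have hev : ∀ᶠ s : Finset ℕ in atTop, ∏ i ∈ s, b i = 0 := by
    filter_upwards [eventually_ge_atTop ({j} : Finset ℕ)] with s hs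
    exact Finset.prod_eq_zero (hs (Finset.mem_singleton_self j)) hj
  exact (tendsto_const_nhds : Tendsto (fun _ : Finset ℕ => (0:ℂ)) atTop (𝓝 0)).congr'
    (by filter_upwards [hev] with s hs; exact hs.symm)

lemma hasProd_of_ne_zero {b : ℕ → ℂ} (hs : Summable (fun k => 1 - b k)) (hnz : ∀ k, b k ≠ 0) :
    HasProd b (Complex.exp (∑' k, Complex.log (b k))) := by
  have hlog : Summable fun k => Complex.log (b k) := by
    have h := hs.clog_one_sub
    simpa using h
  have h := hlog.hasSum.cexp
  have he : (Complex.exp ∘ fun k => Complex.log (b k)) = b := funext fun k => Complex.exp_log (hnz k)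
  rwa [he] at h

lemma multipliable_of_summable_sub {b : ℕ → ℂ} (hs : Summable (fun k => 1 - b k)) :
    Multipliable b := by
  by_cases h : ∃ j, b j = 0
  · exact ⟨0, hasProd_zero_of_exists_eq_zero h⟩
  · push_neg at h
    exact ⟨_, hasProd_of_ne_zero hs h⟩

lemma tprod_ne_zero {b : ℕ → ℂ} (hs : Summable (fun k => 1 - b k)) (hnz : ∀ k, b k ≠ 0) :
    (∏' k, b k) ≠ 0 := by
  rw [(hasProd_of_ne_zero hs hnz).tprod_eq]; exact Complex.exp_ne_zero _

lemma tprod_eq_zero {b : ℕ → ℂ} (h : ∃ j, b j = 0) : (∏' k, b k) = 0 :=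
  (hasProd_zero_of_exists_eq_zero h).tprod_eq

lemma summable_log_of_summable_sub {b : ℕ → ℂ} (hs : Summable (fun k => 1 - b k)) :
    Summable fun k => Complex.log (b k) := by
  have h := hs.clog_one_sub
  simpa using h

lemma tprod_shift {b : ℕ → ℂ} (hs : Summable (fun k => 1 - b k)) :
    ∏' k, b k = b 0 * ∏' k, b (k + 1) := by
  by_cases h : ∃ j, b j = 0
  · obtain ⟨j, hj⟩ := h
    rw [tprod_eq_zero ⟨j, hj⟩]
    cases j with
    | zero => rw [hj, zero_mul]
    | succ i => rw [tprod_eq_zero ⟨i, hj⟩, mul_zero]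
  · push_neg at h
    have hs' : Summable fun k => 1 - b (k + 1) := (summable_nat_add_iff 1).2 hs
    rw [(hasProd_of_ne_zero hs h).tprod_eq,
      (hasProd_of_ne_zero hs' (fun k => h (k+1))).tprod_eq]
    rw [← Complex.exp_log (h 0), ← Complex.exp_add]
    congr 1
    have hsum := summable_log_of_summable_sub hs
    have := Summable.sum_add_tsum_nat_add (f := fun k => Complex.log (b k)) 1 hsum
    rw [← this]
    simp

lemma differentiable_finset_prod {ι : Type*} (s : Finset ι) (g : ι → ℂ → ℂ)
    (h : ∀ i, Differentiable ℂ (g i)) : Differentiable ℂ fun w => ∏ i ∈ s, g i w := by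
  classical
  induction s using Finset.cons_induction with
  | empty => simpa using (differentiable_const (1:ℂ))
  | cons i s his ih =>
    simp only [Finset.prod_cons]
    exact (h i).mul ih

lemma prod_differentiable {a : ℕ → ℂ → ℂ} {r : ℝ} (hr0 : 0 ≤ r) (hr1 : r < 1)
    (ha : ∀ k, Differentiable ℂ (a k))
    (hb : ∀ ρ : ℝ, 0 < ρ → ∃ C : ℝ, 0 ≤ C ∧ ∀ k, ∀ w ∈ Metric.closedBall (0:ℂ) ρ,
      ‖a k w - 1‖ ≤ C * r ^ k) :
    Differentiable ℂ fun w => ∏' k, a k w := by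
  intro z
  obtain ⟨C, hC0, hC⟩ := hb (‖z‖ + 1) (by positivity)
  set B := Metric.ball (0:ℂ) (‖z‖ + 1) with hB
  have hBopen : IsOpen B := Metric.isOpen_ball
  have hBsub : B ⊆ Metric.closedBall 0 (‖z‖ + 1) := Metric.ball_subset_closedBall
  have htend : Tendsto (fun k : ℕ => C * r ^ k) atTop (𝓝 0) := by
    simpa using (tendsto_pow_atTop_nhds_zero_of_lt_one hr0 hr1).const_mul C
  obtain ⟨K, hK⟩ := Filter.eventually_atTop.mp
    (htend.eventually_lt_const (by norm_num : (0:ℝ) < 1/2))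
  have hKK : C * r ^ K ≤ 1/2 := (hK K le_rfl).le
  have hhalf : ∀ j : ℕ, ∀ w ∈ B, ‖a (j + K) w - 1‖ ≤ (1/2) * r ^ j := by
    intro j w hw
    calc ‖a (j + K) w - 1‖ ≤ C * r ^ (j + K) := hC _ w (hBsub hw)
    _ = (C * r ^ K) * r ^ j := by ring
    _ ≤ (1/2) * r ^ j := mul_le_mul_of_nonneg_right hKK (pow_nonneg hr0 j)
  have hhalf' : ∀ j : ℕ, ∀ w ∈ B, ‖a (j + K) w - 1‖ ≤ 1/2 := by
    intro j w hw
    refine (hhalf j w hw).trans ?_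
    nlinarith [pow_le_one₀ hr0 hr1.le (n := j), pow_nonneg hr0 j]
  have hslit : ∀ j : ℕ, ∀ w ∈ B, a (j + K) w ∈ Complex.slitPlane := by
    intro j w hw
    rw [Complex.mem_slitPlane_iff]
    left
    have h1 : |(a (j + K) w - 1).re| ≤ ‖a (j + K) w - 1‖ := by
      exact Complex.abs_re_le_norm _
    have h2 := abs_le.mp (h1.trans (hhalf' j w hw))
    have h3 : (a (j + K) w - 1).re = (a (j+K) w).re - 1 := by simp
    linarith [h2.1]
  have hne : ∀ j : ℕ, ∀ w ∈ B, a (j + K) w ≠ 0 := by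
    intro j w hw h0
    have h := hhalf' j w hw
    rw [h0] at h
    norm_num at h
  set tail := fun w => ∑' j : ℕ, Complex.log (a (j + K) w) with htail
  have hlogb : ∀ j : ℕ, ∀ w ∈ B, ‖Complex.log (a (j + K) w)‖ ≤ (3/2) * ((1/2) * r ^ j) := by
    intro j w hw
    have h1 : (1 : ℂ) + (a (j + K) w - 1) = a (j + K) w := by ring
    have h2 := Complex.norm_log_one_add_half_le_self (z := a (j + K) w - 1) (hhalf' j w hw)
    rw [h1] at h2
    exact h2.trans (mul_le_mul_of_nonneg_left (hhalf j w hw) (by norm_num))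
  have hsumM : Summable (fun j : ℕ => (3/2:ℝ) * ((1/2) * r ^ j)) :=
    ((summable_geometric_of_lt_one hr0 hr1).mul_left _).mul_left _
  have htuo := tendstoUniformlyOn_tsum_nat hsumM (fun j w hw => hlogb j w hw)
  have hdiffsum : ∀ N : ℕ, DifferentiableOn ℂ
      (fun w => ∑ j ∈ Finset.range N, Complex.log (a (j + K) w)) B := by
    intro N
    apply DifferentiableOn.fun_sum
    intro j _
    intro w hw
    exact (((ha (j + K)) w).clog (hslit j w hw)).differentiableWithinAt
  have htaildiff : DifferentiableOn ℂ tail B :=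
    htuo.tendstoLocallyUniformlyOn.differentiableOn (Filter.Eventually.of_forall hdiffsum) hBopen
  have heq : ∀ w ∈ B, (∏' k, a k w) = (∏ k ∈ Finset.range K, a k w) * Complex.exp (tail w) := by
    intro w hw
    have hsuball : Summable fun k : ℕ => 1 - a k w := by
      apply Summable.of_norm_bounded ((summable_geometric_of_lt_one hr0 hr1).mul_left C)
      intro k
      rw [norm_sub_rev]
      exact hC k w (hBsub hw)
    by_cases hzero : ∃ k, a k w = 0
    · obtain ⟨k, hk⟩ := hzero
      have hkK : k < K := by
        by_contra hge
        push_neg at hge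
        have h2 := hne (k - K) w hw
        rw [Nat.sub_add_cancel hge] at h2
        exact h2 hk
      rw [tprod_eq_zero ⟨k, hk⟩, Finset.prod_eq_zero (Finset.mem_range.mpr hkK) hk, zero_mul]
    · push_neg at hzero
      have hlogsum : Summable fun k : ℕ => Complex.log (a k w) :=
        summable_log_of_summable_sub hsuball
      rw [(hasProd_of_ne_zero hsuball hzero).tprod_eq]
      rw [← Summable.sum_add_tsum_nat_add K hlogsum, Complex.exp_add]
      congr 1
      rw [Complex.exp_sum]
      exact Finset.prod_congr rfl fun k _ => Complex.exp_log (hzero k)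
  have hd : DifferentiableOn ℂ
      (fun w => (∏ k ∈ Finset.range K, a k w) * Complex.exp (tail w)) B := by
    apply DifferentiableOn.mul
    · exact (differentiable_finset_prod _ _ ha).differentiableOn
    · exact htaildiff.cexp
  have hfin : DifferentiableOn ℂ (fun w => ∏' k, a k w) B := hd.congr heq
  exact hfin.differentiableAt (hBopen.mem_nhds (by simp [hB]))

/-! ### The basic theta-type product -/

def fA (τ : ℂ) (k : ℕ) (w : ℂ) : ℂ := 1 - ee (w + (k : ℂ) * τ)
def fB (τ : ℂ) (k : ℕ) (w : ℂ) : ℂ := 1 - ee (((k : ℂ) + 1) * τ - w)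
def ff (τ : ℂ) (w : ℂ) : ℂ := ∏' k, fA τ k w * fB τ k w
def PPA (τ : ℂ) (w : ℂ) : ℂ := ∏' k, fA τ (k + 1) w
def PPB (τ : ℂ) (w : ℂ) : ℂ := ∏' k, fB τ k w

variable {τ : ℂ}

lemma qlt (hτ : 0 < τ.im) : ‖ee τ‖ < 1 := by
  rw [ee_norm, Real.exp_lt_one_iff]
  nlinarith [Real.pi_pos]

lemma qpos (τ : ℂ) : 0 < ‖ee τ‖ := norm_pos_iff.mpr (ee_ne_zero τ)

lemma fA_eq (τ : ℂ) (k : ℕ) (w : ℂ) : fA τ k w = 1 - ee w * ee τ ^ k := by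
  rw [fA, ee_add, ee_nat]

lemma fB_eq (τ : ℂ) (k : ℕ) (w : ℂ) : fB τ k w = 1 - ee (τ - w) * ee τ ^ k := by
  rw [fB, show ((k:ℂ)+1)*τ - w = (τ - w) + (k:ℂ)*τ from by ring, ee_add, ee_nat]

lemma summable_geo_c (c : ℂ) {x : ℂ} (hx : ‖x‖ < 1) : Summable fun k : ℕ => c * x ^ k :=
  (summable_geometric_of_norm_lt_one hx).mul_left c

lemma summable_sub_fA (hτ : 0 < τ.im) (w : ℂ) : Summable fun k => 1 - fA τ k w := by
  have h : (fun k => 1 - fA τ k w) = fun k => ee w * ee τ ^ k := by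
    funext k; rw [fA_eq]; ring
  rw [h]; exact summable_geo_c _ (qlt hτ)

lemma summable_sub_fA' (hτ : 0 < τ.im) (w : ℂ) : Summable fun k => 1 - fA τ (k + 1) w := by
  have h : (fun k => 1 - fA τ (k + 1) w) = fun k => (ee w * ee τ) * ee τ ^ k := by
    funext k; rw [fA_eq]; push_cast; rw [pow_succ]; ring
  rw [h]; exact summable_geo_c _ (qlt hτ)

lemma summable_sub_fB (hτ : 0 < τ.im) (w : ℂ) : Summable fun k => 1 - fB τ k w := by
  have h : (fun k => 1 - fB τ k w) = fun k => ee (τ - w) * ee τ ^ k := by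
    funext k; rw [fB_eq]; ring
  rw [h]; exact summable_geo_c _ (qlt hτ)

lemma summable_sub_G (hτ : 0 < τ.im) (w : ℂ) :
    Summable fun k : ℕ => 1 - (1 - ee ((k:ℂ) * τ - w)) := by
  have h : (fun k : ℕ => 1 - (1 - ee ((k:ℂ) * τ - w))) = fun k => ee (-w) * ee τ ^ k := by
    funext k
    rw [show (k:ℂ)*τ - w = -w + (k:ℂ)*τ from by ring, ee_add, ee_nat]
    ring
  rw [h]; exact summable_geo_c _ (qlt hτ)

lemma summable_sub_ffterm (hτ : 0 < τ.im) (w : ℂ) :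
    Summable fun k => 1 - fA τ k w * fB τ k w := by
  have hsq : ‖ee τ ^ 2‖ < 1 := by
    rw [norm_pow]
    exact pow_lt_one₀ (norm_nonneg _) (qlt hτ) two_ne_zero
  have h : (fun k => 1 - fA τ k w * fB τ k w) =
      fun k => (ee w * ee τ ^ k + ee (τ - w) * ee τ ^ k) -
        (ee w * ee (τ - w)) * (ee τ ^ 2) ^ k := by
    funext k
    rw [fA_eq, fB_eq]
    ring
  rw [h]
  exact ((summable_geo_c (ee w) (qlt hτ)).add (summable_geo_c (ee (τ - w)) (qlt hτ))).sub
    (summable_geo_c _ hsq)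

lemma mult_fA (hτ : 0 < τ.im) (w : ℂ) : Multipliable fun k => fA τ k w :=
  multipliable_of_summable_sub (summable_sub_fA hτ w)

lemma mult_fB (hτ : 0 < τ.im) (w : ℂ) : Multipliable fun k => fB τ k w :=
  multipliable_of_summable_sub (summable_sub_fB hτ w)

lemma ff_eq_split (hτ : 0 < τ.im) (w : ℂ) :
    ff τ w = (1 - ee w) * (PPA τ w * PPB τ w) := by
  rw [ff, Multipliable.tprod_mul (mult_fA hτ w) (mult_fB hτ w), tprod_shift (summable_sub_fA hτ w)]
  have h0 : fA τ 0 w = 1 - ee w := by simp [fA]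
  rw [h0, PPA, PPB]
  ring

lemma ff_add_one (hτ : 0 < τ.im) (w : ℂ) : ff τ (w + 1) = ff τ w := by
  rw [ff, ff]
  apply tprod_congr
  intro k
  have hA : fA τ k (w + 1) = fA τ k w := by
    rw [fA, fA, show w + 1 + (k:ℂ)*τ = (w + (k:ℂ)*τ) + 1 from by ring, ee_add, ee_one, mul_one]
  have hB : fB τ k (w + 1) = fB τ k w := by
    have hm : ee (-1 : ℂ) = 1 := (ee_eq_one_iff _).mpr ⟨-1, by push_cast; ring⟩
    rw [fB, fB, show ((k:ℂ)+1)*τ - (w+1) = (((k:ℂ)+1)*τ - w) + (-1) from by ring, ee_add, hm,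
      mul_one]
  rw [hA, hB]

lemma ff_add_tau (hτ : 0 < τ.im) (w : ℂ) : ff τ (w + τ) = -ee (-w) * ff τ w := by
  have hstep : ∀ k : ℕ, fA τ k (w + τ) * fB τ k (w + τ) =
      fA τ (k+1) w * (1 - ee ((k:ℂ)*τ - w)) := by
    intro k
    have hA : fA τ k (w + τ) = fA τ (k+1) w := by
      have harg : w + τ + (k:ℂ)*τ = w + (((k:ℕ):ℂ)+1)*τ := by ring
      simp only [fA, Nat.cast_add, Nat.cast_one, harg]
    have hB : fB τ k (w + τ) = 1 - ee ((k:ℂ)*τ - w) := by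
      have harg : ((k:ℂ)+1)*τ - (w + τ) = (k:ℂ)*τ - w := by ring
      simp only [fB, harg]
    rw [hA, hB]
  rw [ff, tprod_congr hstep,
    Multipliable.tprod_mul (multipliable_of_summable_sub (summable_sub_fA' hτ w))
      (multipliable_of_summable_sub (summable_sub_G hτ w)),
    tprod_shift (summable_sub_G hτ w)]
  have h0 : 1 - ee (((0:ℕ):ℂ)*τ - w) = 1 - ee (-w) := by norm_num
  have htail : (fun k : ℕ => 1 - ee ((((k+1):ℕ):ℂ)*τ - w)) = fun k => fB τ k w := by
    funext k
    rw [fB]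
    congr 2
    push_cast
    ring
  rw [h0, htail]
  have key : 1 - ee (-w) = -ee (-w) * (1 - ee w) := by
    linear_combination -(ee_mul_neg w)
  rw [ff_eq_split hτ w, PPA, PPB, key]
  ring

lemma ff_eq_zero_iff (hτ : 0 < τ.im) (w : ℂ) :
    ff τ w = 0 ↔ ∃ a b : ℤ, w = (a:ℂ) + (b:ℂ) * τ := by
  constructor
  · intro h
    by_contra hno
    push_neg at hno
    refine tprod_ne_zero (summable_sub_ffterm hτ w) ?_ h
    intro k
    apply mul_ne_zero
    · intro h0
      rw [fA, sub_eq_zero] at h0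
      obtain ⟨m, hm⟩ := (ee_eq_one_iff _).mp h0.symm
      exact hno m (-(k:ℤ)) (by push_cast; linear_combination hm)
    · intro h0
      rw [fB, sub_eq_zero] at h0
      obtain ⟨m, hm⟩ := (ee_eq_one_iff _).mp h0.symm
      exact hno (-m) ((k:ℤ)+1) (by push_cast; linear_combination -hm)
  · rintro ⟨a, b, rfl⟩
    rw [ff]
    apply tprod_eq_zero
    by_cases hb : b ≤ 0
    · refine ⟨(-b).toNat, ?_⟩
      have hcast : (((-b).toNat : ℕ) : ℂ) = -(b : ℂ) := by
        have h1 : (((-b).toNat : ℤ) : ℂ) = ((-b : ℤ) : ℂ) := by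
          rw [Int.toNat_of_nonneg (by linarith)]
        push_cast at h1 ⊢
        exact h1
      have hA : fA τ ((-b).toNat) ((a:ℂ) + (b:ℂ)*τ) = 0 := by
        rw [fA]
        have h1 : ee ((a:ℂ) + (b:ℂ)*τ + (((-b).toNat : ℕ):ℂ)*τ) = 1 :=
          (ee_eq_one_iff _).mpr ⟨a, by rw [hcast]; ring⟩
        rw [h1, sub_self]
      rw [hA, zero_mul]
    · push_neg at hb
      refine ⟨(b-1).toNat, ?_⟩
      have hcast : (((b-1).toNat : ℕ) : ℂ) = (b : ℂ) - 1 := by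
        have h1 : (((b-1).toNat : ℤ) : ℂ) = ((b - 1 : ℤ) : ℂ) := by
          rw [Int.toNat_of_nonneg (by linarith)]
        push_cast at h1 ⊢
        exact h1
      have hB : fB τ ((b-1).toNat) ((a:ℂ) + (b:ℂ)*τ) = 0 := by
        rw [fB]
        have h1 : ee (((((b-1).toNat : ℕ):ℂ)+1)*τ - ((a:ℂ) + (b:ℂ)*τ)) = 1 :=
          (ee_eq_one_iff _).mpr ⟨-a, by rw [hcast]; push_cast; ring⟩
        rw [h1, sub_self]
      rw [hB, mul_zero]

lemma norm_ee_le_ball {ρ : ℝ} (w : ℂ) (hw : ‖w‖ ≤ ρ) :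
    ‖ee w‖ ≤ Real.exp (2 * Real.pi * ρ) := by
  refine (ee_norm_le w).trans (Real.exp_le_exp.mpr ?_)
  nlinarith [Real.pi_pos]

lemma norm_ee_sub_le_ball (hτ : 0 < τ.im) {ρ : ℝ} (w : ℂ) (hw : ‖w‖ ≤ ρ) :
    ‖ee (τ - w)‖ ≤ Real.exp (2 * Real.pi * ρ) := by
  rw [ee_norm]
  apply Real.exp_le_exp.mpr
  have h1 : w.im ≤ ‖w‖ := le_trans (le_abs_self _)
    (by exact Complex.abs_im_le_norm w)
  have h2 : (τ - w).im = τ.im - w.im := by simp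
  rw [h2]
  nlinarith [Real.pi_pos]

lemma fA_differentiable (τ : ℂ) (k : ℕ) : Differentiable ℂ (fA τ k) := by
  have : Differentiable ℂ fun w : ℂ => ee (w + (k:ℂ)*τ) :=
    ee_differentiable.comp (differentiable_id.add_const _)
  exact this.const_sub 1

lemma fB_differentiable (τ : ℂ) (k : ℕ) : Differentiable ℂ (fB τ k) := by
  have : Differentiable ℂ fun w : ℂ => ee (((k:ℂ)+1)*τ - w) :=
    ee_differentiable.comp ((differentiable_const _).sub differentiable_id)
  exact this.const_sub 1

lemma ff_differentiable (hτ : 0 < τ.im) : Differentiable ℂ (ff τ) := by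
  apply prod_differentiable (norm_nonneg (ee τ)) (qlt hτ)
  · exact fun k => (fA_differentiable τ k).mul (fB_differentiable τ k)
  · intro ρ hρ
    set E := Real.exp (2 * Real.pi * ρ) with hE
    have hE1 : 1 ≤ E := Real.one_le_exp (by positivity)
    refine ⟨3 * E^2, by positivity, ?_⟩
    intro k w hw
    have hwρ : ‖w‖ ≤ ρ := by simpa [Metric.mem_closedBall, dist_zero_right] using hw
    set r := ‖ee τ‖ with hr
    have hr0 : 0 ≤ r := norm_nonneg _
    have hr1 : r < 1 := qlt hτ
    have haA : ‖ee w * ee τ ^ k‖ ≤ E * r ^ k := by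
      rw [norm_mul, norm_pow]
      exact mul_le_mul_of_nonneg_right (norm_ee_le_ball w hwρ) (pow_nonneg hr0 k)
    have haB : ‖ee (τ - w) * ee τ ^ k‖ ≤ E * r ^ k := by
      rw [norm_mul, norm_pow]
      exact mul_le_mul_of_nonneg_right (norm_ee_sub_le_ball hτ w hwρ) (pow_nonneg hr0 k)
    have hfact : fA τ k w * fB τ k w - 1 =
        -(ee w * ee τ^k) - (ee (τ - w) * ee τ^k) + (ee w * ee τ^k) * (ee (τ-w) * ee τ^k) := by
      rw [fA_eq, fB_eq]; ring
    have hbound : ‖fA τ k w * fB τ k w - 1‖ ≤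
        ‖ee w * ee τ^k‖ + ‖ee (τ-w) * ee τ^k‖ + ‖ee w * ee τ^k‖ * ‖ee (τ-w) * ee τ^k‖ := by
      rw [hfact]
      calc ‖-(ee w * ee τ^k) - (ee (τ - w) * ee τ^k) + (ee w * ee τ^k) * (ee (τ-w) * ee τ^k)‖
          ≤ ‖-(ee w * ee τ^k) - (ee (τ - w) * ee τ^k)‖ + ‖(ee w * ee τ^k) * (ee (τ-w) * ee τ^k)‖ :=
            norm_add_le _ _
        _ ≤ (‖ee w * ee τ^k‖ + ‖ee (τ-w) * ee τ^k‖) + ‖ee w * ee τ^k‖ * ‖ee (τ-w) * ee τ^k‖ := by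
            rw [norm_mul]
            gcongr
            exact (norm_sub_le _ _).trans (by rw [norm_neg])
    have hrk1 : r ^ k ≤ 1 := pow_le_one₀ hr0 hr1.le
    have hrk0 : 0 ≤ r ^ k := pow_nonneg hr0 k
    have hAnn : (0:ℝ) ≤ ‖ee w * ee τ ^ k‖ := norm_nonneg _
    have hBnn : (0:ℝ) ≤ ‖ee (τ - w) * ee τ ^ k‖ := norm_nonneg _
    refine hbound.trans ?_
    nlinarith [mul_le_mul haA haB hBnn (by positivity : (0:ℝ) ≤ E * r ^ k)]

lemma PPA_differentiable (hτ : 0 < τ.im) : Differentiable ℂ (PPA τ) := by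
  apply prod_differentiable (norm_nonneg (ee τ)) (qlt hτ)
  · exact fun k => fA_differentiable τ (k + 1)
  · intro ρ hρ
    refine ⟨Real.exp (2 * Real.pi * ρ), by positivity, ?_⟩
    intro k w hw
    have hwρ : ‖w‖ ≤ ρ := by simpa [Metric.mem_closedBall, dist_zero_right] using hw
    have h1 : fA τ (k+1) w - 1 = -(ee w * ee τ ^ (k+1)) := by rw [fA_eq]; ring
    rw [h1, norm_neg, norm_mul, norm_pow]
    have h2 : ‖ee τ‖ ^ (k+1) ≤ ‖ee τ‖ ^ k :=
      pow_le_pow_of_le_one (norm_nonneg _) (qlt hτ).le (Nat.le_succ k)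
    calc ‖ee w‖ * ‖ee τ‖ ^ (k+1) ≤ Real.exp (2*Real.pi*ρ) * ‖ee τ‖ ^ (k+1) := by
          exact mul_le_mul_of_nonneg_right (norm_ee_le_ball w hwρ) (by positivity)
      _ ≤ Real.exp (2*Real.pi*ρ) * ‖ee τ‖ ^ k := by
          exact mul_le_mul_of_nonneg_left h2 (by positivity)

lemma PPB_differentiable (hτ : 0 < τ.im) : Differentiable ℂ (PPB τ) := by
  apply prod_differentiable (norm_nonneg (ee τ)) (qlt hτ)
  · exact fun k => fB_differentiable τ k
  · intro ρ hρ
    refine ⟨Real.exp (2 * Real.pi * ρ), by positivity, ?_⟩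
    intro k w hw
    have hwρ : ‖w‖ ≤ ρ := by simpa [Metric.mem_closedBall, dist_zero_right] using hw
    have h1 : fB τ k w - 1 = -(ee (τ - w) * ee τ ^ k) := by rw [fB_eq]; ring
    rw [h1, norm_neg, norm_mul, norm_pow]
    exact mul_le_mul_of_nonneg_right (norm_ee_sub_le_ball hτ w hwρ) (by positivity)

lemma PPA_PPB_ne_zero (hτ : 0 < τ.im) : PPA τ 0 * PPB τ 0 ≠ 0 := by
  apply mul_ne_zero
  · apply tprod_ne_zero (summable_sub_fA' hτ 0)
    intro k h0
    rw [fA_eq, sub_eq_zero] at h0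
    have h1 : ‖ee (0:ℂ) * ee τ ^ (k+1)‖ < 1 := by
      rw [ee_zero, one_mul, norm_pow]
      exact pow_lt_one₀ (norm_nonneg _) (qlt hτ) k.succ_ne_zero
    rw [← h0] at h1
    norm_num at h1
  · apply tprod_ne_zero (summable_sub_fB hτ 0)
    intro k h0
    rw [fB_eq, sub_eq_zero] at h0
    have h1 : ‖ee (τ - 0) * ee τ ^ k‖ < 1 := by
      rw [sub_zero, norm_mul, norm_pow, ← pow_succ']
      exact pow_lt_one₀ (norm_nonneg _) (qlt hτ) k.succ_ne_zero
    rw [← h0] at h1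
    norm_num at h1

lemma deriv_ff_zero_ne (hτ : 0 < τ.im) : deriv (ff τ) 0 ≠ 0 := by
  have hg : DifferentiableAt ℂ (fun w => PPA τ w * PPB τ w) 0 :=
    ((PPA_differentiable hτ).mul (PPB_differentiable hτ)) 0
  have h0 : HasDerivAt (fun w => 1 - ee w) (-(ee 0 * (2*(Real.pi:ℂ)*Complex.I))) 0 :=
    (ee_hasDerivAt 0).const_sub 1
  have hffeq : ff τ = fun w => (1 - ee w) * (PPA τ w * PPB τ w) := funext (ff_eq_split hτ)
  rw [hffeq, (h0.fun_mul hg.hasDerivAt).deriv]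
  rw [ee_zero]
  simp only [sub_self, zero_mul, add_zero]
  rw [neg_mul]
  apply neg_ne_zero.mpr
  rw [one_mul]
  exact mul_ne_zero two_pi_I_ne_zero (PPA_PPB_ne_zero hτ)

lemma shift_one_int {F : ℂ → ℂ} (h : ∀ w, F (w + 1) = F w) :
    ∀ (m : ℤ) (w : ℂ), F (w + (m:ℂ)) = F w := by
  intro m
  induction m using Int.induction_on with
  | zero => intro w; simpa using rfl
  | succ k ih =>
    intro w
    have h1 : w + (((k:ℤ)+1 : ℤ):ℂ) = (w + ((k:ℤ):ℂ)) + 1 := by push_cast; ring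
    rw [h1, h, ih]
  | pred k ih =>
    intro w
    have h1 : (w + ((-(k:ℤ)-1 : ℤ):ℂ)) + 1 = w + ((-(k:ℤ) : ℤ):ℂ) := by push_cast; ring
    have h2 := h (w + ((-(k:ℤ)-1 : ℤ):ℂ))
    rw [h1] at h2
    rw [← h2, ih]

lemma zero_propagate {F : ℂ → ℂ} (c : ℂ) (h : ∀ w, ∃ d : ℂ, d ≠ 0 ∧ F (w + c) = d * F w) :
    ∀ (m : ℤ) (w : ℂ), F w = 0 → F (w + (m:ℂ) * c) = 0 := by
  intro m
  induction m using Int.induction_on with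
  | zero => intro w h0; simpa using h0
  | succ k ih =>
    intro w h0
    obtain ⟨d, hd, hde⟩ := h (w + ((k:ℤ):ℂ)*c)
    have harg : w + (((k:ℤ)+1:ℤ):ℂ)*c = (w + ((k:ℤ):ℂ)*c) + c := by push_cast; ring
    rw [harg, hde, ih w h0, mul_zero]
  | pred k ih =>
    intro w h0
    obtain ⟨d, hd, hde⟩ := h (w + ((-(k:ℤ)-1 : ℤ):ℂ)*c)
    have harg : (w + ((-(k:ℤ)-1:ℤ):ℂ)*c) + c = w + ((-(k:ℤ):ℤ):ℂ)*c := by push_cast; ring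
    rw [harg] at hde
    have hz := ih w h0
    exact (mul_eq_zero.mp (hde.symm.trans hz)).resolve_left hd

lemma deriv_ff_add_one (hτ : 0 < τ.im) (w : ℂ) :
    deriv (ff τ) (w + 1) = deriv (ff τ) w := by
  have h : (fun v => ff τ (v + 1)) = ff τ := funext fun v => ff_add_one hτ v
  calc deriv (ff τ) (w+1) = deriv (fun v => ff τ (v+1)) w := by rw [deriv_comp_add_const]
  _ = deriv (ff τ) w := by rw [h]

lemma deriv_ff_add_tau (hτ : 0 < τ.im) (w : ℂ) (hw : ff τ w = 0) :
    deriv (ff τ) (w + τ) = -ee (-w) * deriv (ff τ) w := by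
  have h1 : (fun v => ff τ (v + τ)) = fun v => -ee (-v) * ff τ v :=
    funext fun v => ff_add_tau hτ v
  have hneg : HasDerivAt (fun v : ℂ => ee (-v)) (ee (-w) * (2*(Real.pi:ℂ)*Complex.I) * (-1)) w := by
    have h2 := (ee_hasDerivAt (-w)).comp w (hasDerivAt_neg w)
    exact h2
  have hR : HasDerivAt (fun v => -ee (-v) * ff τ v)
      ((-(ee (-w) * (2*(Real.pi:ℂ)*Complex.I) * (-1))) * ff τ w + (-ee (-w)) * deriv (ff τ) w) w :=
    hneg.neg.mul ((ff_differentiable hτ) w).hasDerivAt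
  have h3 : deriv (fun v => ff τ (v + τ)) w = deriv (fun v => -ee (-v) * ff τ v) w := by rw [h1]
  rw [deriv_comp_add_const] at h3
  rw [h3, hR.deriv, hw]
  ring

lemma ff_zero_at_lattice (hτ : 0 < τ.im) (b : ℤ) : ff τ ((b:ℂ)*τ) = 0 :=
  (ff_eq_zero_iff hτ _).mpr ⟨0, b, by push_cast; ring⟩

lemma deriv_ff_lattice_ne (hτ : 0 < τ.im) : ∀ a b : ℤ, deriv (ff τ) ((a:ℂ) + (b:ℂ)*τ) ≠ 0 := by
  have hτstep : ∀ b : ℤ, deriv (ff τ) ((b:ℂ)*τ) ≠ 0 := by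
    intro b
    induction b using Int.induction_on with
    | zero => simpa using deriv_ff_zero_ne hτ
    | succ k ih =>
      have h := deriv_ff_add_tau hτ (((k:ℤ):ℂ)*τ) (ff_zero_at_lattice hτ k)
      have harg : (((k:ℤ)+1:ℤ):ℂ)*τ = ((k:ℤ):ℂ)*τ + τ := by push_cast; ring
      rw [harg, h]
      exact mul_ne_zero (neg_ne_zero.mpr (ee_ne_zero _)) ih
    | pred k ih =>
      intro hcontra
      apply ih
      have hz : ff τ (((-(k:ℤ)-1 : ℤ):ℂ)*τ) = 0 := ff_zero_at_lattice hτ _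
      have h := deriv_ff_add_tau hτ (((-(k:ℤ)-1 : ℤ):ℂ)*τ) hz
      have harg : ((-(k:ℤ)-1:ℤ):ℂ)*τ + τ = ((-(k:ℤ):ℤ):ℂ)*τ := by push_cast; ring
      rw [harg] at h
      rw [h, hcontra, mul_zero]
  intro a b
  have hper := shift_one_int (F := deriv (ff τ)) (deriv_ff_add_one hτ) a ((b:ℂ)*τ)
  rw [show (a:ℂ) + (b:ℂ)*τ = (b:ℂ)*τ + (a:ℂ) from by ring, hper]
  exact hτstep b

lemma vanish_aux (hτ : 0 < τ.im) (μ : ℂ) (S : ℂ → ℂ)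
    (hS : Differentiable ℂ S) (h1 : ∀ w, S (w + 1) = S w) (h2 : ∀ w, S (w + τ) = μ * S w)
    (hμ1 : μ ≠ 1) (hμ2 : μ ≠ ee τ)
    (hlow : ‖ee τ‖ ≤ ‖μ‖) (hup : ‖μ‖ ≤ 1) : ∀ w, S w = 0 := by
  set r := ‖ee τ‖ with hrdef
  have hr0 : 0 < r := qpos τ
  have hr1 : r < 1 := qlt hτ
  have hμ0 : μ ≠ 0 := by
    intro h
    rw [h, norm_zero] at hlow
    linarith
  have hSint : ∀ (m : ℤ) (w : ℂ), S (w + (m:ℂ)) = S w := shift_one_int h1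
  set g : ℂ → ℂ := fun q => S (Complex.log q / (2*(Real.pi:ℂ)*Complex.I)) with hgdef
  have hg1 : ∀ w, g (ee w) = S w := by
    intro w
    have hexp : Complex.exp (Complex.log (ee w)) = Complex.exp (2*(Real.pi:ℂ)*Complex.I*w) := by
      rw [Complex.exp_log (ee_ne_zero w)]; rfl
    obtain ⟨m, hm⟩ := Complex.exp_eq_exp_iff_exists_int.mp hexp
    show S (Complex.log (ee w) / (2*(Real.pi:ℂ)*Complex.I)) = S w
    rw [hm]
    have hdiv : (2*(Real.pi:ℂ)*Complex.I*w + (m:ℂ)*(2*(Real.pi:ℂ)*Complex.I))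
        / (2*(Real.pi:ℂ)*Complex.I) = w + (m:ℂ) := by
      rw [div_eq_iff two_pi_I_ne_zero]
      ring
    rw [hdiv, hSint m w]
  have hgd : ∀ q : ℂ, q ≠ 0 → DifferentiableAt ℂ g q := by
    intro q₀ h0
    have hL : DifferentiableAt ℂ (fun q => Complex.log (q / q₀) + Complex.log q₀) q₀ := by
      apply DifferentiableAt.add_const
      apply DifferentiableAt.clog (differentiableAt_id.div_const q₀)
      rw [id_eq, div_self h0]
      exact Complex.one_mem_slitPlane
    have hEq : ∀ᶠ q in 𝓝 q₀, g q =
        S ((Complex.log (q / q₀) + Complex.log q₀) / (2*(Real.pi:ℂ)*Complex.I)) := by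
      have hev : ∀ᶠ q in 𝓝 q₀, q ≠ 0 := eventually_ne_nhds h0
      have hev2 : ∀ᶠ q in 𝓝 q₀, q / q₀ ∈ Complex.slitPlane := by
        have hcont : ContinuousAt (fun q : ℂ => q / q₀) q₀ := continuousAt_id.div_const q₀
        exact hcont.eventually_mem (Complex.isOpen_slitPlane.mem_nhds
          (by rw [div_self h0]; exact Complex.one_mem_slitPlane))
      filter_upwards [hev, hev2] with q hq hq2
      have hqexp : Complex.exp (Complex.log (q/q₀) + Complex.log q₀) = q := by
        rw [Complex.exp_add, Complex.exp_log (div_ne_zero hq h0), Complex.exp_log h0,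
          div_mul_cancel₀ _ h0]
      have hqexp2 : Complex.exp (Complex.log q) = q := Complex.exp_log hq
      obtain ⟨m, hm⟩ := Complex.exp_eq_exp_iff_exists_int.mp (hqexp2.trans hqexp.symm)
      show S (Complex.log q / (2*(Real.pi:ℂ)*Complex.I)) =
        S ((Complex.log (q / q₀) + Complex.log q₀) / (2*(Real.pi:ℂ)*Complex.I))
      rw [hm]
      have hdiv : (Complex.log (q/q₀) + Complex.log q₀ + (m:ℂ)*(2*(Real.pi:ℂ)*Complex.I))
          / (2*(Real.pi:ℂ)*Complex.I)
          = (Complex.log (q/q₀) + Complex.log q₀)/(2*(Real.pi:ℂ)*Complex.I) + (m:ℂ) := by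
        rw [div_eq_iff two_pi_I_ne_zero, add_mul, div_mul_cancel₀ _ two_pi_I_ne_zero]
      rw [hdiv, hSint m _]
    have hdiff : DifferentiableAt ℂ
        (fun q => S ((Complex.log (q/q₀) + Complex.log q₀) / (2*(Real.pi:ℂ)*Complex.I))) q₀ :=
      (hS _).comp q₀ (hL.div_const _)
    exact hdiff.congr_of_eventuallyEq hEq
  have hgτ : ∀ q : ℂ, q ≠ 0 → g (ee τ * q) = μ * g q := by
    intro q hq
    set w := Complex.log q / (2*(Real.pi:ℂ)*Complex.I) with hw
    have hqw : ee w = q := by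
      rw [ee, hw, mul_div_cancel₀ _ two_pi_I_ne_zero, Complex.exp_log hq]
    calc g (ee τ * q) = g (ee (w + τ)) := by rw [ee_add, hqw, mul_comm]
    _ = S (w + τ) := hg1 _
    _ = μ * S w := h2 w
    _ = μ * g q := by rw [← hg1 w, hqw]
  have hgτk : ∀ (k : ℤ) (q : ℂ), q ≠ 0 → g (ee τ ^ k * q) = μ ^ k * g q := by
    intro k
    induction k using Int.induction_on with
    | zero => intro q hq; simp
    | succ k ih =>
      intro q hq
      rw [show (ee τ : ℂ) ^ ((k:ℤ)+1) = ee τ ^ (k:ℤ) * ee τ from by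
        rw [zpow_add₀ (ee_ne_zero τ), zpow_one]]
      rw [show ee τ ^ (k:ℤ) * ee τ * q = ee τ ^ (k:ℤ) * (ee τ * q) from by ring]
      rw [ih (ee τ * q) (mul_ne_zero (ee_ne_zero τ) hq), hgτ q hq]
      rw [show (μ:ℂ) ^ ((k:ℤ)+1) = μ ^ (k:ℤ) * μ from by rw [zpow_add₀ hμ0, zpow_one]]
      ring
    | pred k ih =>
      intro q hq
      have h := hgτ (ee τ ^ (-(k:ℤ)-1) * q) (mul_ne_zero (zpow_ne_zero _ (ee_ne_zero τ)) hq)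
      rw [show ee τ * (ee τ ^ (-(k:ℤ)-1) * q) = ee τ ^ (-(k:ℤ)) * q from by
        rw [← mul_assoc]
        congr 1
        rw [mul_comm, ← zpow_add_one₀ (ee_ne_zero τ)]
        congr 1
        ring] at h
      rw [ih q hq] at h
      have h3 : g (ee τ ^ (-(k:ℤ)-1) * q) = μ⁻¹ * (μ ^ (-(k:ℤ)) * g q) := by
        apply mul_left_cancel₀ hμ0
        rw [← h]
        field_simp
      rw [h3, show μ⁻¹ * (μ ^ (-(k:ℤ)) * g q) = μ ^ (-(k:ℤ)-1) * g q from by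
        rw [zpow_sub_one₀ hμ0]; ring]
  set A : Set ℂ := {x | r ≤ ‖x‖ ∧ ‖x‖ ≤ 1} with hA
  have hAcompact : IsCompact A := by
    have hclosed : IsClosed A := by
      have hset : A = (fun x : ℂ => ‖x‖) ⁻¹' (Set.Icc r 1) := by
        ext x; simp [hA, Set.mem_Icc]
      rw [hset]
      exact isClosed_Icc.preimage continuous_norm
    have hbdd : Bornology.IsBounded A := by
      apply (Metric.isBounded_closedBall (x := (0:ℂ)) (r := 1)).subset
      intro x hx
      simpa [Metric.mem_closedBall, dist_zero_right] using hx.2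
    exact Metric.isCompact_of_isClosed_isBounded hclosed hbdd
  have hg_cont : ContinuousOn g A := by
    intro q hq
    have hq0 : q ≠ 0 := by
      intro h0
      subst h0
      have h1 := hq.1
      rw [norm_zero] at h1
      linarith
    exact ((hgd q hq0).continuousAt).continuousWithinAt
  obtain ⟨M, hM⟩ := hAcompact.exists_bound_of_continuousOn hg_cont
  have hM0 : 0 ≤ M := le_trans (norm_nonneg (g 1)) (hM 1 (by simp [hA]; exact hr1.le))
  set ℓ := Real.log r with hℓ
  have hℓneg : ℓ < 0 := Real.log_neg hr0 hr1
  have hrexp : ∀ k : ℤ, r ^ k = Real.exp ((k:ℝ) * ℓ) := by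
    intro k
    rw [← Real.rpow_intCast r k, Real.rpow_def_of_pos hr0]
    congr 1
    rw [hℓ]; ring
  have hdec : ∀ q : ℂ, q ≠ 0 → ∃ k : ℤ,
      (Real.exp (((k:ℝ)+1)*ℓ) < ‖q‖ ∧ ‖q‖ ≤ Real.exp ((k:ℝ)*ℓ)) ∧
      ‖g q‖ ≤ M * ‖μ‖ ^ k ∧ (‖q‖ ≤ 1 → 0 ≤ k) := by
    intro q hq
    have hq0 : 0 < ‖q‖ := norm_pos_iff.mpr hq
    set t := Real.log ‖q‖ / ℓ with ht
    set k := ⌊t⌋ with hk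
    have hk1 : (k:ℝ) ≤ t := Int.floor_le t
    have hk2 : t < (k:ℝ) + 1 := Int.lt_floor_add_one t
    have hqt : Real.log ‖q‖ = t * ℓ := by
      rw [ht, div_mul_cancel₀ _ (ne_of_lt hℓneg)]
    have hup1 : ‖q‖ ≤ Real.exp ((k:ℝ)*ℓ) := by
      conv_lhs => rw [← Real.exp_log hq0]
      rw [hqt]
      apply Real.exp_le_exp.mpr
      nlinarith
    have hlow1 : Real.exp (((k:ℝ)+1)*ℓ) < ‖q‖ := by
      conv_rhs => rw [← Real.exp_log hq0]
      rw [hqt]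
      apply Real.exp_lt_exp.mpr
      nlinarith
    refine ⟨k, ⟨hlow1, hup1⟩, ?_, ?_⟩
    · set q' := ee τ ^ (-k) * q with hq'
      have hq'0 : q' ≠ 0 := mul_ne_zero (zpow_ne_zero _ (ee_ne_zero τ)) hq
      have hnormq' : ‖q'‖ = Real.exp ((-k:ℝ)*ℓ) * ‖q‖ := by
        rw [hq', norm_mul, norm_zpow, ← hrdef, hrexp (-k)]
        push_cast
        ring_nf
      have hq'A : q' ∈ A := by
        constructor
        · rw [hnormq']
          calc r = Real.exp ℓ := by rw [hℓ, Real.exp_log hr0]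
          _ = Real.exp ((-k:ℝ)*ℓ) * Real.exp (((k:ℝ)+1)*ℓ) := by
              rw [← Real.exp_add]; congr 1; ring
          _ ≤ Real.exp ((-k:ℝ)*ℓ) * ‖q‖ := by
              exact mul_le_mul_of_nonneg_left hlow1.le (Real.exp_pos _).le
        · rw [hnormq']
          calc Real.exp ((-k:ℝ)*ℓ) * ‖q‖ ≤ Real.exp ((-k:ℝ)*ℓ) * Real.exp ((k:ℝ)*ℓ) :=
              mul_le_mul_of_nonneg_left hup1 (Real.exp_pos _).le
          _ = 1 := by rw [← Real.exp_add, show (-k:ℝ)*ℓ + (k:ℝ)*ℓ = 0 from by ring, Real.exp_zero]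
      have hgq : g q = μ ^ k * g q' := by
        have h := hgτk k q' hq'0
        rw [hq', show ee τ ^ k * (ee τ ^ (-k) * q) = q from by
          rw [← mul_assoc, ← zpow_add₀ (ee_ne_zero τ)]; simp] at h
        exact h
      rw [hgq, norm_mul, norm_zpow]
      calc ‖μ‖^k * ‖g q'‖ ≤ ‖μ‖^k * M :=
        mul_le_mul_of_nonneg_left (hM q' hq'A) (by positivity)
      _ = M * ‖μ‖^k := mul_comm _ _
    · intro hq1
      rw [hk]
      apply Int.le_floor.mpr
      push_cast
      rw [ht, div_nonneg_iff]
      right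
      exact ⟨Real.log_nonpos hq0.le hq1, hℓneg.le⟩
  have hμpos : 0 < ‖μ‖ := norm_pos_iff.mpr hμ0
  have hB1 : ∀ q : ℂ, q ≠ 0 → ‖q‖ ≤ 1 → ‖g q‖ ≤ M := by
    intro q hq hq1
    obtain ⟨k, _, hgb, hk0⟩ := hdec q hq
    have hk0' := hk0 hq1
    have hle1 : ‖μ‖^k ≤ 1 := by
      rw [show k = ((k.toNat : ℕ) : ℤ) from (Int.toNat_of_nonneg hk0').symm, zpow_natCast]
      exact pow_le_one₀ (norm_nonneg μ) hup
    calc ‖g q‖ ≤ M * ‖μ‖^k := hgb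
    _ ≤ M * 1 := mul_le_mul_of_nonneg_left hle1 hM0
    _ = M := mul_one M
  have hB2 : ∀ q : ℂ, 1 ≤ ‖q‖ → ‖g q‖ ≤ (M / r) * ‖q‖ := by
    intro q hq1
    have hq : q ≠ 0 := by
      intro h
      rw [h, norm_zero] at hq1
      linarith
    obtain ⟨k, ⟨hlow1, _⟩, hgb, _⟩ := hdec q hq
    rcases le_or_gt 0 k with hk | hk
    · have hle1 : ‖μ‖^k ≤ 1 := by
        rw [show k = ((k.toNat : ℕ) : ℤ) from (Int.toNat_of_nonneg hk).symm, zpow_natCast]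
        exact pow_le_one₀ (norm_nonneg μ) hup
      have h1 : ‖g q‖ ≤ M := by
        calc ‖g q‖ ≤ M * ‖μ‖^k := hgb
        _ ≤ M * 1 := mul_le_mul_of_nonneg_left hle1 hM0
        _ = M := mul_one M
      have h2 : M ≤ (M/r)*‖q‖ := by
        rw [div_mul_eq_mul_div, le_div_iff₀ hr0]
        nlinarith
      linarith
    · have hμk : ‖μ‖^k ≤ r^k := by
        have hjk : k = -(((-k).toNat : ℕ) : ℤ) := by
          rw [Int.toNat_of_nonneg (by linarith : (0:ℤ) ≤ -k)]; ring
        rw [hjk, zpow_neg, zpow_neg, zpow_natCast, zpow_natCast]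
        apply inv_anti₀ (pow_pos hr0 _)
        exact pow_le_pow_left₀ hr0.le hlow _
      have hrk : r^k ≤ ‖q‖ / r := by
        rw [hrexp k, le_div_iff₀ hr0]
        have hr' : r = Real.exp ℓ := by rw [hℓ, Real.exp_log hr0]
        have he : Real.exp ((k:ℝ)*ℓ) * r = Real.exp (((k:ℝ)+1)*ℓ) := by
          rw [hr', ← Real.exp_add]
          congr 1
          ring
        rw [he]
        exact hlow1.le
      calc ‖g q‖ ≤ M * ‖μ‖^k := hgb
      _ ≤ M * (r^k) := mul_le_mul_of_nonneg_left hμk hM0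
      _ ≤ M * (‖q‖/r) := mul_le_mul_of_nonneg_left hrk hM0
      _ = (M/r)*‖q‖ := by ring
  set h : ℂ → ℂ := Function.update g 0 (limUnder (𝓝[≠] (0:ℂ)) g) with hh
  have hgball : DifferentiableOn ℂ g (Metric.ball (0:ℂ) 2 \ {0}) := by
    intro q hq
    exact (hgd q (by simpa using hq.2)).differentiableWithinAt
  have hbdd : BddAbove (norm ∘ g '' (Metric.ball (0:ℂ) 2 \ {0})) := by
    refine ⟨M + (M/r)*2, ?_⟩
    rintro y ⟨q, ⟨hq2, hq0⟩, rfl⟩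
    simp only [Function.comp]
    have hq0' : q ≠ 0 := by simpa using hq0
    have hMr0 : (0:ℝ) ≤ M/r := by positivity
    rcases le_or_gt ‖q‖ 1 with hc | hc
    · have := hB1 q hq0' hc
      nlinarith
    · have hgle := hB2 q hc.le
      have hq2' : ‖q‖ ≤ 2 := by
        have := Metric.mem_ball.mp hq2
        rw [dist_zero_right] at this
        linarith
      nlinarith
  have hupdate := Complex.differentiableOn_update_limUnder_of_bddAbove
    (Metric.ball_mem_nhds (0:ℂ) (by norm_num : (0:ℝ) < 2)) hgball hbdd
  have hhd : Differentiable ℂ h := by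
    intro q
    by_cases hq : q = 0
    · subst hq
      exact hupdate.differentiableAt (Metric.isOpen_ball.mem_nhds (by
        simp [Metric.mem_ball]))
    · have hga : DifferentiableAt ℂ g q := hgd q hq
      apply hga.congr_of_eventuallyEq
      filter_upwards [eventually_ne_nhds hq] with x hx
      rw [hh]
      exact Function.update_of_ne hx _ _
  have hh_eq : ∀ q : ℂ, q ≠ 0 → h q = g q := fun q hq => Function.update_of_ne hq _ _
  have hh0_bound : ‖h 0‖ ≤ M := by
    have htend : Tendsto h (𝓝[≠] (0:ℂ)) (𝓝 (h 0)) :=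
      ((hhd 0).continuousAt).continuousWithinAt
    apply le_of_tendsto htend.norm
    have hball : ∀ᶠ q in 𝓝 (0:ℂ), q ∈ Metric.ball (0:ℂ) 1 :=
      Metric.isOpen_ball.eventually_mem (Metric.mem_ball_self one_pos)
    filter_upwards [self_mem_nhdsWithin, hball.filter_mono nhdsWithin_le_nhds] with q hq hq1
    rw [hh_eq q hq]
    apply hB1 q hq
    have := Metric.mem_ball.mp hq1
    rw [dist_zero_right] at this
    linarith
  set F := dslope h 0 with hF
  have hFd : Differentiable ℂ F := by
    have := (Complex.differentiableOn_dslope (c := (0:ℂ)) (s := Set.univ)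
      Filter.univ_mem).mpr hhd.differentiableOn
    rw [hF]
    exact differentiableOn_univ.mp this
  have hFbound : ∃ M₂ : ℝ, ∀ q : ℂ, ‖F q‖ ≤ M₂ := by
    obtain ⟨M₁, hM₁⟩ := (isCompact_closedBall (0:ℂ) 1).exists_bound_of_continuousOn
      hFd.continuous.continuousOn
    refine ⟨max M₁ (M/r + M), ?_⟩
    intro q
    rcases le_or_gt ‖q‖ 1 with hc | hc
    · refine le_trans (hM₁ q ?_) (le_max_left _ _)
      rw [Metric.mem_closedBall, dist_zero_right]
      exact hc
    · have hq0 : q ≠ 0 := by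
        intro h0
        rw [h0, norm_zero] at hc
        linarith
      have hFq : F q = (h q - h 0) / q := by
        rw [hF, dslope_of_ne _ hq0, slope_def_field, sub_zero]
      rw [hFq, norm_div]
      have hhq : ‖h q‖ ≤ (M/r)*‖q‖ := by
        rw [hh_eq q hq0]
        exact hB2 q hc.le
      have hsub : ‖h q - h 0‖ ≤ (M/r)*‖q‖ + M*‖q‖ := by
        calc ‖h q - h 0‖ ≤ ‖h q‖ + ‖h 0‖ := norm_sub_le _ _
        _ ≤ (M/r)*‖q‖ + M := add_le_add hhq hh0_bound
        _ ≤ (M/r)*‖q‖ + M*‖q‖ := by nlinarith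
      have hqpos : (0:ℝ) < ‖q‖ := by linarith
      calc ‖h q - h 0‖/‖q‖ ≤ ((M/r)*‖q‖ + M*‖q‖)/‖q‖ :=
        (div_le_div_iff_of_pos_right hqpos).mpr hsub
      _ = M/r + M := by
        rw [div_eq_iff (ne_of_gt hqpos)]
        ring
      _ ≤ max M₁ (M/r + M) := le_max_right _ _
  obtain ⟨M₂, hM₂⟩ := hFbound
  have hFconst : ∀ q, F q = F 0 := by
    intro q
    apply hFd.apply_eq_apply_of_bounded
    apply isBounded_iff_forall_norm_le.mpr
    exact ⟨M₂, by rintro x ⟨q', rfl⟩; exact hM₂ q'⟩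
  have haffine : ∀ q : ℂ, q ≠ 0 → g q = h 0 + F 0 * q := by
    intro q hq
    have h1' : F q = F 0 := hFconst q
    rw [hF, dslope_of_ne _ hq, slope_def_field, sub_zero] at h1'
    have h2' : h q - h 0 = F 0 * q := (div_eq_iff hq).mp h1'
    rw [← hh_eq q hq]
    linear_combination h2'
  have ha0 : h 0 = 0 := by
    have e1 := hgτ 1 one_ne_zero
    have e2 := hgτ (-1) (by norm_num)
    rw [mul_one] at e1
    rw [haffine (ee τ) (ee_ne_zero τ), haffine 1 one_ne_zero] at e1
    rw [haffine (ee τ * (-1)) (mul_ne_zero (ee_ne_zero τ) (by norm_num)),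
      haffine (-1) (by norm_num)] at e2
    have key : h 0 * (1 - μ) = 0 := by linear_combination (e1 + e2) / 2
    rcases mul_eq_zero.mp key with hc | hc
    · exact hc
    · exact absurd (by linear_combination -hc : μ = 1) hμ1
  have hb0 : F 0 = 0 := by
    have e1 := hgτ 1 one_ne_zero
    rw [mul_one, haffine (ee τ) (ee_ne_zero τ), haffine 1 one_ne_zero, ha0] at e1
    have key : F 0 * (ee τ - μ) = 0 := by linear_combination e1
    rcases mul_eq_zero.mp key with hc | hc
    · exact hc
    · exact absurd (by linear_combination -hc : μ = ee τ) hμ2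
  intro w
  rw [← hg1 w, haffine (ee w) (ee_ne_zero w), ha0, hb0, zero_add, zero_mul]

lemma vanish (hτ : 0 < τ.im) (μ : ℂ) (S : ℂ → ℂ)
    (hS : Differentiable ℂ S) (h1 : ∀ w, S (w + 1) = S w) (h2 : ∀ w, S (w + τ) = μ * S w)
    (hμ : ∀ b : ℤ, μ ≠ ee ((b:ℂ) * τ)) : ∀ w, S w = 0 := by
  by_cases hμ0 : μ = 0
  · intro w
    have h := h2 (w - τ)
    rw [sub_add_cancel, hμ0, zero_mul] at h
    exact h
  · set r := ‖ee τ‖ with hrdef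
    have hr0 : 0 < r := qpos τ
    have hr1 : r < 1 := qlt hτ
    set ℓ := Real.log r with hℓ
    have hℓneg : ℓ < 0 := Real.log_neg hr0 hr1
    set t := Real.log ‖μ‖ / ℓ with ht
    set m := ⌊t⌋ with hm
    set T : ℂ → ℂ := fun w => ee (-(m:ℂ) * w) * S w with hT
    set μ' := μ * ee (-(m:ℂ) * τ) with hμ'
    have hT1 : ∀ w, T (w + 1) = T w := by
      intro w
      show ee (-(m:ℂ) * (w+1)) * S (w+1) = ee (-(m:ℂ)*w) * S w
      rw [show -(m:ℂ)*(w+1) = -(m:ℂ)*w + ((-m : ℤ):ℂ) from by push_cast; ring, ee_add, h1]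
      have h0 : ee (((-m : ℤ):ℂ)) = 1 := (ee_eq_one_iff _).mpr ⟨-m, rfl⟩
      rw [h0, mul_one]
    have hT2 : ∀ w, T (w + τ) = μ' * T w := by
      intro w
      show ee (-(m:ℂ) * (w+τ)) * S (w+τ) = μ' * (ee (-(m:ℂ)*w) * S w)
      rw [show -(m:ℂ)*(w+τ) = -(m:ℂ)*τ + -(m:ℂ)*w from by ring, ee_add, h2, hμ']
      ring
    have hTμ : ∀ b : ℤ, μ' ≠ ee ((b:ℂ)*τ) := by
      intro b hb
      apply hμ (b + m)
      rw [hμ'] at hb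
      have hinv : ee ((m:ℂ)*τ) * ee (-(m:ℂ)*τ) = 1 := by
        rw [← ee_add, show (m:ℂ)*τ + -(m:ℂ)*τ = 0 from by ring, ee_zero]
      have hμeq : μ = ee ((b:ℂ)*τ) * ee ((m:ℂ)*τ) := by
        apply mul_right_cancel₀ (ee_ne_zero (-(m:ℂ)*τ))
        rw [hb]
        linear_combination (-ee ((b:ℂ)*τ)) * hinv
      rw [hμeq, ← ee_add]
      congr 1
      push_cast
      ring
    have hμpos : 0 < ‖μ‖ := norm_pos_iff.mpr hμ0
    have hℓval : ℓ = -(2*Real.pi*τ.im) := by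
      rw [hℓ, hrdef, ee_norm, Real.log_exp]
    have hμnorm : ‖μ‖ = Real.exp (t * ℓ) := by
      rw [ht, div_mul_cancel₀ _ (ne_of_lt hℓneg), Real.exp_log hμpos]
    have hmulim : (-(m:ℂ)*τ).im = -(m:ℝ)*τ.im := by
      simp [Complex.mul_im]
    have hμ'norm : ‖μ'‖ = Real.exp ((t - (m:ℝ)) * ℓ) := by
      rw [hμ', norm_mul, ee_norm, hμnorm, ← Real.exp_add, hmulim, hℓval]
      congr 1
      ring
    have hk1 : (m:ℝ) ≤ t := Int.floor_le t
    have hk2 : t < (m:ℝ) + 1 := Int.lt_floor_add_one t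
    have h1b : r ≤ ‖μ'‖ := by
      rw [hμ'norm, show r = Real.exp ℓ from by rw [hℓ, Real.exp_log hr0]]
      apply Real.exp_le_exp.mpr
      nlinarith
    have h2b : ‖μ'‖ ≤ 1 := by
      rw [hμ'norm, show (1:ℝ) = Real.exp 0 from (Real.exp_zero).symm]
      apply Real.exp_le_exp.mpr
      nlinarith
    have hμ'1 : μ' ≠ 1 := by
      have h := hTμ 0
      simpa [ee_zero] using h
    have hμ'2 : μ' ≠ ee τ := by
      have h := hTμ 1
      simpa using h
    have hTd : Differentiable ℂ T := by
      apply Differentiable.mul _ hS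
      exact ee_differentiable.comp (differentiable_id.const_mul _)
    have hTzero := vanish_aux hτ μ' T hTd hT1 hT2 hμ'1 hμ'2 h1b h2b
    intro w
    have h := hTzero w
    rcases mul_eq_zero.mp h with hc | hc
    · exact absurd hc (ee_ne_zero _)
    · exact hc

end ThetaHelp

end

open ThetaHelp Complex Filter Metric Topology in
/-- Two elliptic polynomials `P₁, P₂ ∈ Θ_n(χ)` with `χ(1) = (-1)^n`,
`χ(τ) = (-1)^n e^{2πiα}`, which agree at `n` points `u_1,...,u_n` with
`u_i - u_j ∉ Γ` (`i ≠ j`) and `Σ_k u_k - α ∉ Γ`, coincide identically. -/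
theorem theta_poly_coincide (τ : ℂ) (hτ : 0 < τ.im) (n : ℕ) (hn : 0 < n) (α : ℂ)
    (P₁ P₂ : ℂ → ℂ)
    (hP₁ : Differentiable ℂ P₁ ∧ (∀ w, P₁ (w + 1) = (-1 : ℂ) ^ n * P₁ w) ∧
      (∀ w, P₁ (w + τ) = (-1 : ℂ) ^ n * Complex.exp (2 * (Real.pi : ℂ) * Complex.I * α) *
        Complex.exp (-(2 * (Real.pi : ℂ) * Complex.I * (n : ℂ) * w) -
          (Real.pi : ℂ) * Complex.I * (n : ℂ) * τ) * P₁ w))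
    (hP₂ : Differentiable ℂ P₂ ∧ (∀ w, P₂ (w + 1) = (-1 : ℂ) ^ n * P₂ w) ∧
      (∀ w, P₂ (w + τ) = (-1 : ℂ) ^ n * Complex.exp (2 * (Real.pi : ℂ) * Complex.I * α) *
        Complex.exp (-(2 * (Real.pi : ℂ) * Complex.I * (n : ℂ) * w) -
          (Real.pi : ℂ) * Complex.I * (n : ℂ) * τ) * P₂ w))
    (u : Fin n → ℂ)
    (hdist : ∀ i j : Fin n, i ≠ j → ¬∃ a b : ℤ, u i - u j = (a : ℂ) + (b : ℂ) * τ)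
    (hsum : ¬∃ a b : ℤ, (∑ k, u k) - α = (a : ℂ) + (b : ℂ) * τ)
    (heq : ∀ i : Fin n, P₁ (u i) = P₂ (u i)) :
    P₁ = P₂ := by
  classical
  obtain ⟨hP₁d, hP₁1, hP₁τ⟩ := hP₁
  obtain ⟨hP₂d, hP₂1, hP₂τ⟩ := hP₂
  set Q : ℂ → ℂ := fun w => P₁ w - P₂ w with hQ
  have hQd : Differentiable ℂ Q := hP₁d.sub hP₂d
  have hQ1 : ∀ w, Q (w + 1) = (-1:ℂ)^n * Q w := by
    intro w
    show P₁ (w+1) - P₂ (w+1) = (-1:ℂ)^n * (P₁ w - P₂ w)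
    rw [hP₁1, hP₂1]
    ring
  set cQ : ℂ → ℂ := fun w => (-1:ℂ)^n * Complex.exp (2*(Real.pi:ℂ)*Complex.I*α) *
    Complex.exp (-(2*(Real.pi:ℂ)*Complex.I*(n:ℂ)*w) - (Real.pi:ℂ)*Complex.I*(n:ℂ)*τ) with hcQ
  have hQτ : ∀ w, Q (w + τ) = cQ w * Q w := by
    intro w
    show P₁ (w+τ) - P₂ (w+τ) = cQ w * (P₁ w - P₂ w)
    rw [hP₁τ, hP₂τ, hcQ]
    ring
  have hm1 : ((-1:ℂ))^n ≠ 0 := pow_ne_zero _ (by norm_num)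
  have hcQ_ne : ∀ w, cQ w ≠ 0 := fun w =>
    mul_ne_zero (mul_ne_zero hm1 (Complex.exp_ne_zero _)) (Complex.exp_ne_zero _)
  have hcQd : Differentiable ℂ cQ := by
    apply Differentiable.const_mul
    apply Differentiable.cexp
    apply Differentiable.sub_const
    exact ((differentiable_id.const_mul _).neg)
  have hQzero : ∀ i : Fin n, ∀ (a b : ℤ), Q (u i + ((a:ℂ) + (b:ℂ)*τ)) = 0 := by
    intro i a b
    have h0 : Q (u i) = 0 := by
      show P₁ (u i) - P₂ (u i) = 0
      rw [heq i, sub_self]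
    have hstep1 : ∀ w, ∃ d : ℂ, d ≠ 0 ∧ Q (w + 1) = d * Q w := fun w => ⟨_, hm1, hQ1 w⟩
    have hstepτ : ∀ w, ∃ d : ℂ, d ≠ 0 ∧ Q (w + τ) = d * Q w := fun w => ⟨cQ w, hcQ_ne w, hQτ w⟩
    have h1 := zero_propagate 1 hstep1 a (u i) h0
    have h2 := zero_propagate τ hstepτ b (u i + (a:ℂ)*1) h1
    rw [show u i + ((a:ℂ) + (b:ℂ)*τ) = u i + (a:ℂ)*1 + (b:ℂ)*τ from by ring]
    exact h2
  set D : ℂ → ℂ := fun w => ∏ i : Fin n, ff τ (w - u i) with hD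
  have hDd : Differentiable ℂ D :=
    differentiable_finset_prod Finset.univ _
      (fun i => (ff_differentiable hτ).comp (differentiable_id.sub_const (u i)))
  have hDzero_iff : ∀ w, D w = 0 ↔ ∃ i : Fin n, ∃ a b : ℤ, w - u i = (a:ℂ) + (b:ℂ)*τ := by
    intro w
    show (∏ i : Fin n, ff τ (w - u i)) = 0 ↔ _
    rw [Finset.prod_eq_zero_iff]
    constructor
    · rintro ⟨i, _, hi⟩
      exact ⟨i, (ff_eq_zero_iff hτ _).mp hi⟩
    · rintro ⟨i, a, b, hab⟩
      exact ⟨i, Finset.mem_univ i, (ff_eq_zero_iff hτ _).mpr ⟨a, b, hab⟩⟩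
  have hQD : ∀ w, D w = 0 → Q w = 0 := by
    intro w hw
    obtain ⟨i, a, b, hab⟩ := (hDzero_iff w).mp hw
    have h := hQzero i a b
    rw [show u i + ((a:ℂ) + (b:ℂ)*τ) = w from by rw [← hab]; ring] at h
    exact h
  have hD1 : ∀ w, D (w + 1) = D w := by
    intro w
    show (∏ i : Fin n, ff τ (w + 1 - u i)) = ∏ i : Fin n, ff τ (w - u i)
    apply Finset.prod_congr rfl
    intro i _
    rw [show w + 1 - u i = (w - u i) + 1 from by ring, ff_add_one hτ]
  set cD : ℂ → ℂ := fun w => (-1:ℂ)^n *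
    Complex.exp (2*(Real.pi:ℂ)*Complex.I*((∑ k, u k) - (n:ℂ)*w)) with hcD
  have hcD_ne : ∀ w, cD w ≠ 0 := fun w => mul_ne_zero hm1 (Complex.exp_ne_zero _)
  have hcDd : Differentiable ℂ cD := by
    apply Differentiable.const_mul
    apply Differentiable.cexp
    apply Differentiable.const_mul
    exact (differentiable_const _).sub (differentiable_id.const_mul _)
  have hDτ : ∀ w, D (w + τ) = cD w * D w := by
    intro w
    show (∏ i : Fin n, ff τ (w + τ - u i)) = cD w * ∏ i : Fin n, ff τ (w - u i)
    have hterm : ∀ i ∈ Finset.univ, ff τ (w + τ - u i) =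
        (-1) * ee (u i - w) * ff τ (w - u i) := by
      intro i _
      rw [show w + τ - u i = (w - u i) + τ from by ring, ff_add_tau hτ,
        show -(w - u i) = u i - w from by ring]
      ring
    rw [Finset.prod_congr rfl hterm, Finset.prod_mul_distrib, Finset.prod_mul_distrib,
      Finset.prod_const, Finset.card_univ, Fintype.card_fin]
    have hexp : (∏ i : Fin n, ee (u i - w)) =
        Complex.exp (2*(Real.pi:ℂ)*Complex.I*((∑ k, u k) - (n:ℂ)*w)) := by
      rw [show (fun i : Fin n => ee (u i - w)) = fun i : Fin n =>
        Complex.exp (2*(Real.pi:ℂ)*Complex.I*(u i - w)) from rfl, ← Complex.exp_sum]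
      congr 1
      calc ∑ i : Fin n, 2*(Real.pi:ℂ)*Complex.I*(u i - w)
          = (∑ i : Fin n, 2*(Real.pi:ℂ)*Complex.I*(u i)) -
            (∑ _i : Fin n, 2*(Real.pi:ℂ)*Complex.I*w) := by
            rw [← Finset.sum_sub_distrib]
            apply Finset.sum_congr rfl
            intros
            ring
        _ = 2*(Real.pi:ℂ)*Complex.I*(∑ k, u k) - (n:ℂ)*(2*(Real.pi:ℂ)*Complex.I*w) := by
            rw [← Finset.mul_sum, Finset.sum_const, Finset.card_univ, Fintype.card_fin,
              nsmul_eq_mul]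
        _ = 2*(Real.pi:ℂ)*Complex.I*((∑ k, u k) - (n:ℂ)*w) := by ring
    rw [hexp, hcD]
  -- the quotient R = Q/D (with junk value deriv Q / deriv D at zeros of D)
  set R : ℂ → ℂ := fun w => if D w = 0 then deriv Q w / deriv D w else Q w / D w with hR
  have hDderiv_ne : ∀ w, D w = 0 → deriv D w ≠ 0 := by
    intro w hw
    obtain ⟨i, a, b, hab⟩ := (hDzero_iff w).mp hw
    have hGdiff : Differentiable ℂ (fun v => ∏ j ∈ Finset.univ.erase i, ff τ (v - u j)) :=
      differentiable_finset_prod _ _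
        (fun j => (ff_differentiable hτ).comp (differentiable_id.sub_const (u j)))
    have hDsplit : D = fun v => ff τ (v - u i) * ∏ j ∈ Finset.univ.erase i, ff τ (v - u j) := by
      funext v
      exact (Finset.mul_prod_erase Finset.univ (fun j => ff τ (v - u j))
        (Finset.mem_univ i)).symm
    have hffv : ff τ (w - u i) = 0 := (ff_eq_zero_iff hτ _).mpr ⟨a, b, hab⟩
    have hG_ne : (∏ j ∈ Finset.univ.erase i, ff τ (w - u j)) ≠ 0 := by
      rw [Finset.prod_ne_zero_iff]
      intro j hj hzero
      obtain ⟨a', b', hab'⟩ := (ff_eq_zero_iff hτ _).mp hzero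
      apply hdist i j (fun hij => (Finset.mem_erase.mp hj).1 hij.symm)
      exact ⟨a' - a, b' - b, by push_cast; linear_combination hab' - hab⟩
    have hf1 : HasDerivAt (fun v => ff τ (v - u i)) (deriv (ff τ) (w - u i)) w := by
      have h := ((ff_differentiable hτ) (w - u i)).hasDerivAt
      have h2 := h.comp w ((hasDerivAt_id w).sub_const (u i))
      simp only [mul_one] at h2
      exact h2
    have hd := (hf1.fun_mul (hGdiff w).hasDerivAt).deriv
    rw [← hDsplit] at hd
    rw [hd, hffv, zero_mul, add_zero]
    apply mul_ne_zero _ hG_ne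
    rw [show w - u i = (a:ℂ) + (b:ℂ)*τ from hab]
    exact deriv_ff_lattice_ne hτ a b
  have hDiso : ∀ w, D w = 0 → ∀ᶠ v in 𝓝[≠] w, D v ≠ 0 := by
    intro w hw
    have h := (hDd w).hasDerivAt
    rw [hasDerivAt_iff_tendsto_slope] at h
    have h2 := h.eventually_ne (hDderiv_ne w hw)
    filter_upwards [h2, self_mem_nhdsWithin] with v hv hvne h0
    apply hv
    rw [slope_def_field, h0, hw]
    simp
  have hRd : Differentiable ℂ R := by
    intro p
    by_cases hp : D p = 0
    · have hQds : Differentiable ℂ (dslope Q p) :=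
        differentiableOn_univ.mp
          ((Complex.differentiableOn_dslope Filter.univ_mem).mpr hQd.differentiableOn)
      have hDds : Differentiable ℂ (dslope D p) :=
        differentiableOn_univ.mp
          ((Complex.differentiableOn_dslope Filter.univ_mem).mpr hDd.differentiableOn)
      have hDne : dslope D p p ≠ 0 := by
        rw [dslope_same]
        exact hDderiv_ne p hp
      have hdiff : DifferentiableAt ℂ (fun v => dslope Q p v / dslope D p v) p :=
        (hQds p).div (hDds p) hDne
      apply hdiff.congr_of_eventuallyEq
      have hiso := hDiso p hp
      rw [eventually_nhdsWithin_iff] at hiso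
      filter_upwards [hiso] with v hv
      by_cases hvp : v = p
      · subst hvp
        show R v = _
        rw [hR]
        simp only
        rw [if_pos hp, dslope_same, dslope_same]
      · have hDv : D v ≠ 0 := hv (Set.mem_compl_singleton_iff.mpr hvp)
        have hQp : Q p = 0 := hQD p hp
        show R v = _
        rw [hR]
        simp only
        rw [if_neg hDv, dslope_of_ne _ hvp, dslope_of_ne _ hvp, slope_def_field,
          slope_def_field, hQp, hp, sub_zero, sub_zero]
        have hvp' : v - p ≠ 0 := sub_ne_zero.mpr hvp
        field_simp
    · have hev : ∀ᶠ v in 𝓝 p, D v ≠ 0 := (hDd p).continuousAt.eventually_ne hp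
      have hdiff : DifferentiableAt ℂ (fun v => Q v / D v) p := (hQd p).div (hDd p) hp
      apply hdiff.congr_of_eventuallyEq
      filter_upwards [hev] with v hv
      show R v = _
      rw [hR]
      simp only
      rw [if_neg hv]
  set lam : ℂ := Complex.exp (2*(Real.pi:ℂ)*Complex.I*α - 2*(Real.pi:ℂ)*Complex.I*(∑ k, u k) -
    (Real.pi:ℂ)*Complex.I*(n:ℂ)*τ) with hlam
  have hkey : ∀ w, cQ w = lam * cD w := by
    intro w
    show (-1:ℂ)^n * Complex.exp (2*(Real.pi:ℂ)*Complex.I*α) *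
      Complex.exp (-(2*(Real.pi:ℂ)*Complex.I*(n:ℂ)*w) - (Real.pi:ℂ)*Complex.I*(n:ℂ)*τ) =
      lam * ((-1:ℂ)^n * Complex.exp (2*(Real.pi:ℂ)*Complex.I*((∑ k, u k) - (n:ℂ)*w)))
    rw [hlam, mul_assoc, ← Complex.exp_add, ← mul_assoc]
    rw [show 2*(Real.pi:ℂ)*Complex.I*α +
      (-(2*(Real.pi:ℂ)*Complex.I*(n:ℂ)*w) - (Real.pi:ℂ)*Complex.I*(n:ℂ)*τ) =
      (2*(Real.pi:ℂ)*Complex.I*α - 2*(Real.pi:ℂ)*Complex.I*(∑ k, u k) -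
        (Real.pi:ℂ)*Complex.I*(n:ℂ)*τ) + 2*(Real.pi:ℂ)*Complex.I*((∑ k, u k) - (n:ℂ)*w)
      from by ring, Complex.exp_add]
    ring
  have hR1 : ∀ w, R (w + 1) = (-1:ℂ)^n * R w := by
    intro w
    by_cases h : D w = 0
    · have h1 : D (w + 1) = 0 := by rw [hD1 w]; exact h
      show R (w+1) = _
      rw [hR]
      simp only
      rw [if_pos h1, if_pos h]
      have hdQ : deriv Q (w + 1) = (-1:ℂ)^n * deriv Q w := by
        have he : (fun v => Q (v + 1)) = fun v => (-1:ℂ)^n * Q v := funext hQ1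
        calc deriv Q (w + 1) = deriv (fun v => Q (v + 1)) w := by rw [deriv_comp_add_const]
        _ = deriv (fun v => (-1:ℂ)^n * Q v) w := by rw [he]
        _ = (-1:ℂ)^n * deriv Q w := by rw [deriv_const_mul _ (hQd w)]
      have hdD : deriv D (w + 1) = deriv D w := by
        have he : (fun v => D (v + 1)) = D := funext hD1
        calc deriv D (w+1) = deriv (fun v => D (v+1)) w := by rw [deriv_comp_add_const]
        _ = deriv D w := by rw [he]
      rw [hdQ, hdD, mul_div_assoc]
    · have h1 : D (w + 1) ≠ 0 := by rw [hD1 w]; exact h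
      show R (w+1) = _
      rw [hR]
      simp only
      rw [if_neg h1, if_neg h, hQ1, hD1, mul_div_assoc]
  have hRτ : ∀ w, R (w + τ) = lam * R w := by
    intro w
    by_cases h : D w = 0
    · have h1 : D (w + τ) = 0 := by rw [hDτ w, h, mul_zero]
      show R (w+τ) = _
      rw [hR]
      simp only
      rw [if_pos h1, if_pos h]
      have hQw : Q w = 0 := hQD w h
      have hdQ : deriv Q (w + τ) = cQ w * deriv Q w := by
        have he : (fun v => Q (v + τ)) = fun v => cQ v * Q v := funext hQτ
        calc deriv Q (w + τ) = deriv (fun v => Q (v + τ)) w := by rw [deriv_comp_add_const]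
        _ = deriv (fun v => cQ v * Q v) w := by rw [he]
        _ = deriv cQ w * Q w + cQ w * deriv Q w := deriv_mul (hcQd w) (hQd w)
        _ = cQ w * deriv Q w := by rw [hQw, mul_zero, zero_add]
      have hdD : deriv D (w + τ) = cD w * deriv D w := by
        have he : (fun v => D (v + τ)) = fun v => cD v * D v := funext hDτ
        calc deriv D (w + τ) = deriv (fun v => D (v + τ)) w := by rw [deriv_comp_add_const]
        _ = deriv (fun v => cD v * D v) w := by rw [he]
        _ = deriv cD w * D w + cD w * deriv D w := deriv_mul (hcDd w) (hDd w)
        _ = cD w * deriv D w := by rw [h, mul_zero, zero_add]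
      rw [hdQ, hdD, hkey w]
      have hden := hDderiv_ne w h
      field_simp [hcD_ne w]
    · have h1 : D (w + τ) ≠ 0 := by
        rw [hDτ w]
        exact mul_ne_zero (hcD_ne w) h
      show R (w+τ) = _
      rw [hR]
      simp only
      rw [if_neg h1, if_neg h, hQτ, hDτ, hkey w]
      field_simp [hcD_ne w]
  -- normalize and apply the Liouville-type vanishing lemma
  set S : ℂ → ℂ := fun w => Complex.exp (-((Real.pi:ℂ)*Complex.I*(n:ℂ)*w)) * R w with hS
  have hSd : Differentiable ℂ S := by
    apply Differentiable.mul _ hRd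
    apply Differentiable.cexp
    exact (differentiable_id.const_mul _).neg
  have hexpn : Complex.exp (-((Real.pi:ℂ)*Complex.I*(n:ℂ))) = (-1:ℂ)^n := by
    rw [show -((Real.pi:ℂ)*Complex.I*(n:ℂ)) = (n:ℂ) * (-((Real.pi:ℂ)*Complex.I)) from by ring,
      Complex.exp_nat_mul, Complex.exp_neg, Complex.exp_pi_mul_I]
    norm_num
  have hS1 : ∀ w, S (w + 1) = S w := by
    intro w
    show Complex.exp (-((Real.pi:ℂ)*Complex.I*(n:ℂ)*(w+1))) * R (w+1) =
      Complex.exp (-((Real.pi:ℂ)*Complex.I*(n:ℂ)*w)) * R w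
    rw [hR1 w, show -((Real.pi:ℂ)*Complex.I*(n:ℂ)*(w+1)) =
      -((Real.pi:ℂ)*Complex.I*(n:ℂ)*w) + -((Real.pi:ℂ)*Complex.I*(n:ℂ)) from by ring,
      Complex.exp_add, hexpn]
    have hsq : ((-1:ℂ)^n)*((-1:ℂ)^n) = 1 := by
      rw [← mul_pow]
      norm_num
    linear_combination (Complex.exp (-((Real.pi:ℂ)*Complex.I*(n:ℂ)*w)) * R w) * hsq
  set μ : ℂ := Complex.exp (2*(Real.pi:ℂ)*Complex.I*α - 2*(Real.pi:ℂ)*Complex.I*(∑ k, u k) -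
    2*(Real.pi:ℂ)*Complex.I*(n:ℂ)*τ) with hμdef
  have hSτ : ∀ w, S (w + τ) = μ * S w := by
    intro w
    show Complex.exp (-((Real.pi:ℂ)*Complex.I*(n:ℂ)*(w+τ))) * R (w+τ) =
      μ * (Complex.exp (-((Real.pi:ℂ)*Complex.I*(n:ℂ)*w)) * R w)
    rw [hRτ w, show -((Real.pi:ℂ)*Complex.I*(n:ℂ)*(w+τ)) =
      -((Real.pi:ℂ)*Complex.I*(n:ℂ)*w) + -((Real.pi:ℂ)*Complex.I*(n:ℂ)*τ) from by ring,
      Complex.exp_add]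
    have hμlam : Complex.exp (-((Real.pi:ℂ)*Complex.I*(n:ℂ)*τ)) * lam = μ := by
      rw [hlam, hμdef, ← Complex.exp_add]
      congr 1
      ring
    rw [← hμlam]
    ring
  have hμcond : ∀ b : ℤ, μ ≠ ee ((b:ℂ)*τ) := by
    intro b hb
    rw [hμdef, ee] at hb
    obtain ⟨m, hm⟩ := Complex.exp_eq_exp_iff_exists_int.mp hb
    apply hsum
    refine ⟨-m, -(b + (n:ℤ)), mul_left_cancel₀ Complex.two_pi_I_ne_zero ?_⟩
    push_cast at hm ⊢
    linear_combination (-1 : ℂ) * hm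
  have hSzero := vanish hτ μ S hSd hS1 hSτ hμcond
  have hRzero : ∀ w, R w = 0 := by
    intro w
    have h := hSzero w
    rcases mul_eq_zero.mp h with hc | hc
    · exact absurd hc (Complex.exp_ne_zero _)
    · exact hc
  funext w
  have hQw : Q w = 0 := by
    by_cases h : D w = 0
    · exact hQD w h
    · have hr := hRzero w
      rw [hR] at hr
      simp only at hr
      rw [if_neg h] at hr
      exact (div_eq_zero_iff.mp hr).resolve_right h
  exact sub_eq_zero.mp hQw
end

section
/- Let ℋ be a Hopf algebra with subalgebras 𝒜⁻ and 𝒜⁺ such that the multiplication map μ: 𝒜⁻ ⊗ 𝒜⁺ → ℋ is a linear isomorphism, Δ(𝒜⁻) ⊆ ℋ ⊗ 𝒜⁻ (left coideal), and Δ(𝒜⁺) ⊆ 𝒜⁺ ⊗ ℋ (right coideal). Define P⁻(ab) = a·ε(b) and P⁺(ab) = ε(a)·b for a ∈ 𝒜⁻, b ∈ 𝒜⁺. Then μ ∘ (P⁻ ⊗ P⁺) ∘ Δ = id_ℋ. -/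
open TensorProduct

/-- For a Hopf algebra `H = 𝒜⁻ · 𝒜⁺` factorized through two subalgebras (the
multiplication map `𝒜⁻ ⊗ 𝒜⁺ → H` a linear isomorphism), with `𝒜⁻` a left coideal
and `𝒜⁺` a right coideal, the projections `P⁻(ab) = a ε(b)`, `P⁺(ab) = ε(a) b`
satisfy `μ ∘ (P⁻ ⊗ P⁺) ∘ Δ = id`. -/
theorem hopf_projection_identity (k H : Type*) [Field k] [Ring H] [HopfAlgebra k H]
    (Am Ap : Subalgebra k H)
    (hfact : Function.Bijective
      ((LinearMap.mul' k H).comp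
        (TensorProduct.map (Subalgebra.toSubmodule Am).subtype
          (Subalgebra.toSubmodule Ap).subtype)))
    (hAm : ∀ a ∈ Am, Coalgebra.comul (R := k) a ∈
      LinearMap.range (TensorProduct.map (LinearMap.id : H →ₗ[k] H)
        (Subalgebra.toSubmodule Am).subtype))
    (hAp : ∀ a ∈ Ap, Coalgebra.comul (R := k) a ∈
      LinearMap.range (TensorProduct.map (Subalgebra.toSubmodule Ap).subtype
        (LinearMap.id : H →ₗ[k] H)))
    (Pm Pp : H →ₗ[k] H)
    (hPm : ∀ a ∈ Am, ∀ b ∈ Ap, Pm (a * b) = Coalgebra.counit (R := k) b • a)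
    (hPp : ∀ a ∈ Am, ∀ b ∈ Ap, Pp (a * b) = Coalgebra.counit (R := k) a • b) :
    (LinearMap.mul' k H).comp
      ((TensorProduct.map Pm Pp).comp (Coalgebra.comul (R := k) (A := H))) =
      LinearMap.id := by
  -- Auxiliary: Pm (h * b) = ε b • Pm h for any h : H, b ∈ Ap
  have key1 : ∀ (h : H), ∀ b ∈ Ap, Pm (h * b) = Coalgebra.counit (R := k) b • Pm h := by
    intro h b hb
    obtain ⟨t, rfl⟩ := hfact.2 h
    induction t using TensorProduct.induction_on with
    | zero => simp
    | tmul a b' =>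
      simp only [LinearMap.comp_apply, TensorProduct.map_tmul, Submodule.coe_subtype,
        LinearMap.mul'_apply]
      rw [mul_assoc, hPm a.1 a.2 (b'.1 * b) (mul_mem b'.2 hb), hPm a.1 a.2 b'.1 b'.2,
        Bialgebra.counit_mul, mul_comm, mul_smul]
    | add x y hx hy =>
      simp only [map_add, add_mul] at *
      rw [hx, hy, smul_add]
  -- Auxiliary: Pp (a * h) = ε a • Pp h for any a ∈ Am, h : H
  have key2 : ∀ a ∈ Am, ∀ (h : H), Pp (a * h) = Coalgebra.counit (R := k) a • Pp h := by
    intro a ha h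
    obtain ⟨t, rfl⟩ := hfact.2 h
    induction t using TensorProduct.induction_on with
    | zero => simp
    | tmul a' b' =>
      simp only [LinearMap.comp_apply, TensorProduct.map_tmul, Submodule.coe_subtype,
        LinearMap.mul'_apply]
      rw [← mul_assoc, hPp (a * a'.1) (mul_mem ha a'.2) b'.1 b'.2, hPp a'.1 a'.2 b'.1 b'.2,
        Bialgebra.counit_mul, mul_smul]
    | add x y hx hy =>
      simp only [map_add, mul_add] at *
      rw [hx, hy, smul_add]
  have hPm1 : ∀ a ∈ Am, Pm a = a := by
    intro a ha
    have := hPm a ha 1 (one_mem Ap)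
    simpa using this
  have hPp1 : ∀ b ∈ Ap, Pp b = b := by
    intro b hb
    have := hPp 1 (one_mem Am) b hb
    simpa using this
  -- main claim on products of elements of the coideals
  have claim : ∀ (u : H ⊗[k] Am) (v : Ap ⊗[k] H),
      LinearMap.mul' k H ((TensorProduct.map Pm Pp)
        ((TensorProduct.map (LinearMap.id : H →ₗ[k] H)
            (Subalgebra.toSubmodule Am).subtype u) *
         (TensorProduct.map (Subalgebra.toSubmodule Ap).subtype
            (LinearMap.id : H →ₗ[k] H) v))) =
      Pm ((TensorProduct.rid k H)
            ((LinearMap.lTensor H (Coalgebra.counit (R := k)))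
              (TensorProduct.map (LinearMap.id : H →ₗ[k] H)
                (Subalgebra.toSubmodule Am).subtype u))) *
      Pp ((TensorProduct.lid k H)
            ((LinearMap.rTensor H (Coalgebra.counit (R := k)))
              (TensorProduct.map (Subalgebra.toSubmodule Ap).subtype
                (LinearMap.id : H →ₗ[k] H) v))) := by
    intro u v
    induction u using TensorProduct.induction_on with
    | zero => simp
    | add x y hx hy => simp only [map_add, add_mul, hx, hy]
    | tmul h a =>
      induction v using TensorProduct.induction_on with
      | zero => simp
      | add x y hx hy => simp only [map_add, mul_add, hx, hy]
      | tmul p g =>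
        simp only [TensorProduct.map_tmul, LinearMap.id_coe, id_eq, Submodule.coe_subtype,
          Algebra.TensorProduct.tmul_mul_tmul, LinearMap.lTensor_tmul, LinearMap.rTensor_tmul,
          TensorProduct.rid_tmul, TensorProduct.lid_tmul, LinearMap.mul'_apply, map_smul]
        rw [key1 h p.1 p.2, key2 a.1 a.2 g, smul_mul_smul_comm, mul_comm
          (Coalgebra.counit (R := k) p.1), ← smul_mul_smul_comm]
  rw [← LinearMap.cancel_right hfact.2]
  apply TensorProduct.ext'
  intro a b
  simp only [LinearMap.comp_apply, TensorProduct.map_tmul, Submodule.coe_subtype,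
    LinearMap.mul'_apply, LinearMap.id_apply]
  rw [Bialgebra.comul_mul]
  obtain ⟨u, hu⟩ := hAm a.1 a.2
  obtain ⟨v, hv⟩ := hAp b.1 b.2
  rw [← hu, ← hv, claim u v, hu, hv, Coalgebra.lTensor_counit_comul,
    Coalgebra.rTensor_counit_comul, TensorProduct.rid_tmul, TensorProduct.lid_tmul,
    one_smul, one_smul, hPm1 a.1 a.2, hPp1 b.1 b.2]
end

section
/- Define F^(n)(u;v;λ) = ∏_{n≥k>m≥1} (θ(v_k - v_m - ℏ)/θ(v_k - v_m)) · Σ_{σ∈S_n} ∏_{l<l', σ(l)>σ(l')} (θ(v_{σ(l)} - v_{σ(l')} + ℏ)/θ(v_{σ(l)} - v_{σ(l')} - ℏ)) · ∏_{1≤k<m≤n} θ(u_k - v_{σ(m)}) · ∏_{n≥k>m≥1} θ(u_k - v_{σ(m)} + ℏ) · ∏_{m=1}^n (θ(u_m - v_{σ(m)} - λ - (m-1)ℏ)θ(ℏ)/θ(-λ-(m-1)ℏ)). Then F^(n) satisfies the recurrence F^(n)(u_1,...,u_{n-1}, v_n - ℏ; v; λ) = (θ(λ+nℏ)θ(ℏ)/θ(λ+(n-1)ℏ))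 ∏_{m=1}^{n-1} θ(v_n - v_m - ℏ)θ(u_m - v_n) · F^(n-1)(u_1,...,u_{n-1}; v_1,...,v_{n-1}; λ), and F^(1)(u_1;v_1;λ) = θ(u_1-v_1-λ)θ(ℏ)/θ(-λ). -/
open Finset Equiv


def permExt {n : ℕ} (π : Equiv.Perm (Fin n)) : Equiv.Perm (Fin (n+1)) where
  toFun i := Fin.lastCases (Fin.last n) (fun j => (π j).castSucc) i
  invFun i := Fin.lastCases (Fin.last n) (fun j => (π⁻¹ j).castSucc) i
  left_inv i := by cases i using Fin.lastCases <;> simp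
  right_inv i := by cases i using Fin.lastCases <;> simp

@[simp] lemma permExt_last {n} (π : Equiv.Perm (Fin n)) : permExt π (Fin.last n) = Fin.last n := by
  simp [permExt]

@[simp] lemma permExt_castSucc {n} (π : Equiv.Perm (Fin n)) (i : Fin n) :
    permExt π i.castSucc = (π i).castSucc := by
  simp [permExt]

def permRes {n : ℕ} (σ : Equiv.Perm (Fin (n+1))) (hσ : σ (Fin.last n) = Fin.last n) :
    Equiv.Perm (Fin n) where
  toFun i := (σ i.castSucc).castPred (by
    intro hc
    exact absurd (σ.injective (hc.trans hσ.symm)) (Fin.castSucc_lt_last i).ne)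
  invFun i := (σ⁻¹ i.castSucc).castPred (by
    intro hc
    have : i.castSucc = Fin.last n := by
      have := congrArg σ hc
      simpa [hσ] using this
    exact absurd this (Fin.castSucc_lt_last i).ne)
  left_inv i := by
    apply Fin.castSucc_injective
    simp
  right_inv i := by
    apply Fin.castSucc_injective
    simp

lemma permExt_permRes {n} (σ : Equiv.Perm (Fin (n+1))) (hσ : σ (Fin.last n) = Fin.last n) :
    permExt (permRes σ hσ) = σ := by
  ext i
  cases i using Fin.lastCases with
  | last => simp [hσ]
  | cast j => simp [permRes]

lemma sum_perm_fix {n : ℕ} (f : Equiv.Perm (Fin (n+1)) → ℂ)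
    (h0 : ∀ σ, σ (Fin.last n) ≠ Fin.last n → f σ = 0) :
    ∑ σ : Equiv.Perm (Fin (n+1)), f σ = ∑ π : Equiv.Perm (Fin n), f (permExt π) := by
  rw [← Finset.sum_filter_of_ne (p := fun σ : Equiv.Perm (Fin (n+1)) => σ (Fin.last n) = Fin.last n)
      (by intro σ _ hf; by_contra hc; exact hf (h0 σ hc))]
  refine Finset.sum_bij' (fun σ hσ => permRes σ (Finset.mem_filter.mp hσ).2)
    (fun π _ => permExt π) ?_ ?_ ?_ ?_ ?_
  · intro σ hσ; exact Finset.mem_univ _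
  · intro π _; simp
  · intro σ hσ; exact permExt_permRes σ (Finset.mem_filter.mp hσ).2
  · intro π _
    apply Equiv.ext; intro i
    apply Fin.castSucc_injective
    simp [permRes]
  · intro σ hσ
    rw [permExt_permRes]

lemma filter_pair_prod {k : ℕ} (P : Fin k × Fin k → Prop) [DecidablePred P] (f : Fin k × Fin k → ℂ) :
    ∏ p ∈ Finset.univ.filter P, f p = ∏ i : Fin k, ∏ j : Fin k, if P (i, j) then f (i, j) else 1 := by
  rw [Finset.prod_filter, Fintype.prod_prod_type]

lemma prod_pairs_lt {n : ℕ} (f : Fin (n+1) × Fin (n+1) → ℂ) :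
    ∏ p ∈ Finset.univ.filter (fun p : Fin (n+1) × Fin (n+1) => p.1 < p.2), f p =
    (∏ p ∈ Finset.univ.filter (fun p : Fin n × Fin n => p.1 < p.2),
        f (p.1.castSucc, p.2.castSucc)) *
    ∏ m : Fin n, f (m.castSucc, Fin.last n) := by
  rw [filter_pair_prod, filter_pair_prod]
  rw [Fin.prod_univ_castSucc
    (f := fun i : Fin (n+1) => ∏ j : Fin (n+1), if i < j then f (i, j) else 1)]
  have hlast : ∏ j : Fin (n+1), (if Fin.last n < j then f (Fin.last n, j) else 1) = 1 := by
    apply Finset.prod_eq_one; intro j _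
    simp [(Fin.le_last j).not_gt]
  rw [hlast, mul_one, ← Finset.prod_mul_distrib]
  apply Finset.prod_congr rfl
  intro i _
  rw [Fin.prod_univ_castSucc
    (f := fun j : Fin (n+1) => if i.castSucc < j then f (i.castSucc, j) else 1)]
  simp [Fin.castSucc_lt_castSucc_iff, Fin.castSucc_lt_last]

lemma prod_pairs_gt {n : ℕ} (f : Fin (n+1) × Fin (n+1) → ℂ) :
    ∏ p ∈ Finset.univ.filter (fun p : Fin (n+1) × Fin (n+1) => p.2 < p.1), f p =
    (∏ p ∈ Finset.univ.filter (fun p : Fin n × Fin n => p.2 < p.1),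
        f (p.1.castSucc, p.2.castSucc)) *
    ∏ m : Fin n, f (Fin.last n, m.castSucc) := by
  rw [filter_pair_prod, filter_pair_prod]
  rw [Fin.prod_univ_castSucc
    (f := fun i : Fin (n+1) => ∏ j : Fin (n+1), if j < i then f (i, j) else 1)]
  have hlast : ∏ j : Fin (n+1), (if j < Fin.last n then f (Fin.last n, j) else 1) =
      ∏ m : Fin n, f (Fin.last n, m.castSucc) := by
    rw [Fin.prod_univ_castSucc
      (f := fun j : Fin (n+1) => if j < Fin.last n then f (Fin.last n, j) else 1)]
    simp [Fin.castSucc_lt_last]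
  rw [hlast]
  congr 1
  apply Finset.prod_congr rfl
  intro i _
  rw [Fin.prod_univ_castSucc
    (f := fun j : Fin (n+1) => if j < i.castSucc then f (i.castSucc, j) else 1)]
  simp [Fin.castSucc_lt_castSucc_iff, (Fin.castSucc_lt_last i).not_gt]

lemma prod_pairs_inv {n : ℕ} (π : Equiv.Perm (Fin n)) (f : Fin (n+1) × Fin (n+1) → ℂ) :
    ∏ p ∈ Finset.univ.filter
        (fun p : Fin (n+1) × Fin (n+1) => p.1 < p.2 ∧ permExt π p.2 < permExt π p.1), f p =
    ∏ p ∈ Finset.univ.filter (fun p : Fin n × Fin n => p.1 < p.2 ∧ π p.2 < π p.1),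
        f (p.1.castSucc, p.2.castSucc) := by
  rw [filter_pair_prod, filter_pair_prod]
  rw [Fin.prod_univ_castSucc (f := fun i : Fin (n+1) =>
    ∏ j : Fin (n+1), if i < j ∧ permExt π j < permExt π i then f (i, j) else 1)]
  have hlast : (∏ j : Fin (n+1),
      if Fin.last n < j ∧ permExt π j < permExt π (Fin.last n) then f (Fin.last n, j) else 1) = 1 := by
    apply Finset.prod_eq_one; intro j _
    simp [(Fin.le_last j).not_gt]
  rw [hlast, mul_one]
  apply Finset.prod_congr rfl
  intro i _
  rw [Fin.prod_univ_castSucc (f := fun j : Fin (n+1) =>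
    if i.castSucc < j ∧ permExt π j < permExt π i.castSucc then f (i.castSucc, j) else 1)]
  have h1 : (if i.castSucc < Fin.last n ∧ permExt π (Fin.last n) < permExt π i.castSucc
      then f (i.castSucc, Fin.last n) else 1) = 1 := by
    simp [(Fin.le_last (π i).castSucc).not_gt]
  rw [h1, mul_one]
  apply Finset.prod_congr rfl
  intro j _
  simp [Fin.castSucc_lt_castSucc_iff]

/-- The explicit elliptic weight-function formula
`F^(n)(u;v;λ) = ∏_{k>m} θ(v_k-v_m-ℏ)/θ(v_k-v_m) · Σ_{σ∈S_n}
  ∏_{l<l', σ(l)>σ(l')} θ(v_{σ(l)}-v_{σ(l')}+ℏ)/θ(v_{σ(l)}-v_{σ(l')}-ℏ)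
  · ∏_{k<m} θ(u_k-v_{σ(m)}) · ∏_{k>m} θ(u_k-v_{σ(m)}+ℏ)
  · ∏_m θ(u_m-v_{σ(m)}-λ-(m-1)ℏ)θ(ℏ)/θ(-λ-(m-1)ℏ)`. -/
noncomputable def ellF (θ : ℂ → ℂ) (h lam : ℂ) (n : ℕ) (u v : Fin n → ℂ) : ℂ :=
  (∏ p ∈ Finset.univ.filter (fun p : Fin n × Fin n => p.1 < p.2),
      θ (v p.2 - v p.1 - h) / θ (v p.2 - v p.1)) *
  ∑ σ : Equiv.Perm (Fin n),
    (∏ p ∈ Finset.univ.filter (fun p : Fin n × Fin n => p.1 < p.2 ∧ σ p.2 < σ p.1),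
        θ (v (σ p.1) - v (σ p.2) + h) / θ (v (σ p.1) - v (σ p.2) - h)) *
    (∏ p ∈ Finset.univ.filter (fun p : Fin n × Fin n => p.1 < p.2),
        θ (u p.1 - v (σ p.2))) *
    (∏ p ∈ Finset.univ.filter (fun p : Fin n × Fin n => p.2 < p.1),
        θ (u p.1 - v (σ p.2) + h)) *
    ∏ m : Fin n, θ (u m - v (σ m) - lam - (m : ℕ) * h) * θ h / θ (-lam - (m : ℕ) * h)

/-- `F^(n)` satisfies the Korepin-type recurrence of the SOS partition function
with DWBC at `u_{n+1} = v_{n+1} - ℏ`, together with the initial condition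
`F^(1)(u₁;v₁;λ) = θ(u₁-v₁-λ)θ(ℏ)/θ(-λ)`. -/
theorem ellF_recurrence (n : ℕ) (τ : ℂ) (hτ : 0 < τ.im) (θ : ℂ → ℂ)
    (hθd : Differentiable ℂ θ) (hodd : ∀ x, θ (-x) = -θ x)
    (hp1 : ∀ x, θ (x + 1) = -θ x)
    (hp2 : ∀ x, θ (x + τ) =
      -Complex.exp (-(2 * (Real.pi : ℂ) * Complex.I * x) - (Real.pi : ℂ) * Complex.I * τ) * θ x)
    (hd0 : HasDerivAt θ 1 0)
    (h lam : ℂ) (u v : Fin (n + 1) → ℂ)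
    (hgen1 : ∀ j k : Fin (n + 1), j ≠ k →
      θ (v j - v k) ≠ 0 ∧ θ (v j - v k - h) ≠ 0 ∧ θ (v j - v k + h) ≠ 0)
    (hgen2 : ∀ m : Fin (n + 1), θ (-lam - (m : ℕ) * h) ≠ 0)
    (hu : u (Fin.last n) = v (Fin.last n) - h) :
    ellF θ h lam (n + 1) u v =
      (θ (lam + ((n : ℂ) + 1) * h) * θ h / θ (lam + (n : ℂ) * h)) *
        (∏ m : Fin n,
          θ (v (Fin.last n) - v m.castSucc - h) * θ (u m.castSucc - v (Fin.last n))) *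
        ellF θ h lam n (u ∘ Fin.castSucc) (v ∘ Fin.castSucc) ∧
    (∀ a b : ℂ, ellF θ h lam 1 (fun _ => a) (fun _ => b) =
      θ (a - b - lam) * θ h / θ (-lam)) := by
  constructor
  · have hθ0 : θ 0 = 0 := by
      have h0 := hodd 0
      rw [neg_zero] at h0
      linear_combination h0 / 2
    rw [ellF, ellF]
    simp only [Function.comp_apply]
    -- vanishing of terms with σ (last) ≠ last
    have hvan : ∀ σ : Equiv.Perm (Fin (n+1)), σ (Fin.last n) ≠ Fin.last n →
        (∏ p ∈ Finset.univ.filter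
            (fun p : Fin (n+1) × Fin (n+1) => p.1 < p.2 ∧ σ p.2 < σ p.1),
            θ (v (σ p.1) - v (σ p.2) + h) / θ (v (σ p.1) - v (σ p.2) - h)) *
        (∏ p ∈ Finset.univ.filter (fun p : Fin (n+1) × Fin (n+1) => p.1 < p.2),
            θ (u p.1 - v (σ p.2))) *
        (∏ p ∈ Finset.univ.filter (fun p : Fin (n+1) × Fin (n+1) => p.2 < p.1),
            θ (u p.1 - v (σ p.2) + h)) *
        ∏ m : Fin (n+1), θ (u m - v (σ m) - lam - (m : ℕ) * h) * θ h / θ (-lam - (m : ℕ) * h)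
        = 0 := by
      intro σ hσ
      have hne : σ⁻¹ (Fin.last n) ≠ Fin.last n := by
        intro hc
        have h2 := congrArg σ hc
        simp only [Equiv.Perm.coe_inv, Equiv.apply_symm_apply] at h2
        exact hσ h2.symm
      have hlt : σ⁻¹ (Fin.last n) < Fin.last n := (Fin.le_last _).lt_of_ne hne
      have hz : θ (u (Fin.last n) - v (σ (σ⁻¹ (Fin.last n))) + h) = 0 := by
        rw [Equiv.Perm.coe_inv, Equiv.apply_symm_apply, hu]
        rw [show v (Fin.last n) - h - v (Fin.last n) + h = 0 by ring]
        exact hθ0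
      have hz2 : (∏ p ∈ Finset.univ.filter (fun p : Fin (n+1) × Fin (n+1) => p.2 < p.1),
          θ (u p.1 - v (σ p.2) + h)) = 0 := by
        refine Finset.prod_eq_zero (i := (Fin.last n, σ⁻¹ (Fin.last n))) ?_ hz
        exact Finset.mem_filter.mpr ⟨Finset.mem_univ _, hlt⟩
      rw [hz2, mul_zero, zero_mul]
    rw [sum_perm_fix _ hvan]
    -- key rewriting of each surviving term
    have key : ∀ π : Equiv.Perm (Fin n),
        (∏ p ∈ Finset.univ.filter (fun p : Fin (n+1) × Fin (n+1) =>
              p.1 < p.2 ∧ permExt π p.2 < permExt π p.1),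
            θ (v (permExt π p.1) - v (permExt π p.2) + h) /
              θ (v (permExt π p.1) - v (permExt π p.2) - h)) *
        (∏ p ∈ Finset.univ.filter (fun p : Fin (n+1) × Fin (n+1) => p.1 < p.2),
            θ (u p.1 - v (permExt π p.2))) *
        (∏ p ∈ Finset.univ.filter (fun p : Fin (n+1) × Fin (n+1) => p.2 < p.1),
            θ (u p.1 - v (permExt π p.2) + h)) *
        (∏ m : Fin (n+1), θ (u m - v (permExt π m) - lam - (m : ℕ) * h) * θ h /
            θ (-lam - (m : ℕ) * h))
        =
        ((∏ p ∈ Finset.univ.filter (fun p : Fin n × Fin n => p.1 < p.2 ∧ π p.2 < π p.1),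
            θ (v (Fin.castSucc (π p.1)) - v (Fin.castSucc (π p.2)) + h) /
              θ (v (Fin.castSucc (π p.1)) - v (Fin.castSucc (π p.2)) - h)) *
        (∏ p ∈ Finset.univ.filter (fun p : Fin n × Fin n => p.1 < p.2),
            θ (u (Fin.castSucc p.1) - v (Fin.castSucc (π p.2)))) *
        (∏ p ∈ Finset.univ.filter (fun p : Fin n × Fin n => p.2 < p.1),
            θ (u (Fin.castSucc p.1) - v (Fin.castSucc (π p.2)) + h)) *
        ∏ m : Fin n, θ (u (Fin.castSucc m) - v (Fin.castSucc (π m)) - lam - (m : ℕ) * h) * θ h /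
            θ (-lam - (m : ℕ) * h)) *
        ((∏ m : Fin n, θ (u m.castSucc - v (Fin.last n))) *
         (∏ m : Fin n, θ (v (Fin.last n) - v m.castSucc)) *
         (θ (lam + ((n : ℂ) + 1) * h) * θ h / θ (lam + (n : ℂ) * h))) := by
      intro π
      rw [prod_pairs_inv, prod_pairs_lt (f := fun p => θ (u p.1 - v (permExt π p.2))),
        prod_pairs_gt (f := fun p => θ (u p.1 - v (permExt π p.2) + h)),
        Fin.prod_univ_castSucc (f := fun m : Fin (n+1) =>
          θ (u m - v (permExt π m) - lam - (m : ℕ) * h) * θ h / θ (-lam - (m : ℕ) * h))]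
      simp only [permExt_castSucc, permExt_last, Fin.coe_castSucc, Fin.val_last, hu]
      have harg : ∀ x : ℂ, v (Fin.last n) - h - x + h = v (Fin.last n) - x := fun x => by ring
      simp only [harg]
      rw [Equiv.prod_comp π (fun j => θ (v (Fin.last n) - v j.castSucc))]
      rw [show v (Fin.last n) - h - v (Fin.last n) - lam - (n:ℂ) * h = -(lam + ((n:ℂ)+1)*h) by ring,
          show -lam - (n:ℂ)*h = -(lam + (n:ℂ)*h) by ring, hodd, hodd]
      ring
    rw [Finset.sum_congr rfl (fun π _ => key π), ← Finset.sum_mul]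
    rw [prod_pairs_lt (f := fun p : Fin (n+1) × Fin (n+1) => θ (v p.2 - v p.1 - h) / θ (v p.2 - v p.1))]
    have hcancel : (∏ m : Fin n, θ (v (Fin.last n) - v m.castSucc - h) /
          θ (v (Fin.last n) - v m.castSucc)) *
        (∏ m : Fin n, θ (v (Fin.last n) - v m.castSucc)) =
        ∏ m : Fin n, θ (v (Fin.last n) - v m.castSucc - h) := by
      rw [← Finset.prod_mul_distrib]
      exact Finset.prod_congr rfl fun m _ =>
        div_mul_cancel₀ _ (hgen1 _ _ (Fin.castSucc_lt_last m).ne').1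
    rw [Finset.prod_mul_distrib
      (f := fun m : Fin n => θ (v (Fin.last n) - v m.castSucc - h))
      (g := fun m : Fin n => θ (u m.castSucc - v (Fin.last n))), ← hcancel]
    ring

  · intro a b
    simp only [ellF]
    rw [show (Finset.univ.filter (fun p : Fin 1 × Fin 1 => p.1 < p.2)) = ∅ by decide,
        show (Finset.univ.filter (fun p : Fin 1 × Fin 1 => p.2 < p.1)) = ∅ by decide]
    simp [show (Finset.filter (fun p : Fin 1 × Fin 1 => p.1 < p.2 ∧ p.2 < p.1) Finset.univ) = ∅
      by decide, Fin.lt_iff_val_lt_val, Fin.val_eq_zero]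
end

section
/- For each variable u_n, the function Z^(n)(u;v) given by the q-symmetrized sum formula above is a polynomial in u_n of degree n-1, and it is symmetric under permutations of the variables v_1,...,v_n. -/
/-- The projection-method formula for the partition function of the finite
6-vertex model with domain wall boundary conditions:
`Z^(n)(u;v) = (q-q⁻¹)^n ∏_m v_m ∏_{k>j} (q⁻¹v_k - qv_j)/(v_k - v_j)
  · Σ_{σ∈S_n} ∏_{i<j, σ(i)>σ(j)} (qv_{σ(i)} - q⁻¹v_{σ(j)})/(q⁻¹v_{σ(i)} - qv_{σ(j)})
  · ∏_{i>k} (qu_i - q⁻¹v_{σ(k)}) · ∏_{i<k} (u_i - v_{σ(k)})`. -/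
noncomputable def z6 (q : ℂ) (n : ℕ) (u v : Fin n → ℂ) : ℂ :=
  (q - q⁻¹) ^ n * (∏ m, v m) *
  (∏ p ∈ Finset.univ.filter (fun p : Fin n × Fin n => p.1 < p.2),
      (q⁻¹ * v p.2 - q * v p.1) / (v p.2 - v p.1)) *
  ∑ σ : Equiv.Perm (Fin n),
    (∏ p ∈ Finset.univ.filter (fun p : Fin n × Fin n => p.1 < p.2 ∧ σ p.2 < σ p.1),
        (q * v (σ p.1) - q⁻¹ * v (σ p.2)) / (q⁻¹ * v (σ p.1) - q * v (σ p.2))) *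
    (∏ p ∈ Finset.univ.filter (fun p : Fin n × Fin n => p.2 < p.1),
        (q * u p.1 - q⁻¹ * v (σ p.2))) *
    (∏ p ∈ Finset.univ.filter (fun p : Fin n × Fin n => p.1 < p.2),
        (u p.1 - v (σ p.2)))

namespace Z6Aux

variable {n : ℕ}

def pairs (n : ℕ) : Finset (Fin n × Fin n) :=
  Finset.univ.filter (fun p : Fin n × Fin n => p.1 < p.2)

lemma mem_pairs {p : Fin n × Fin n} : p ∈ pairs n ↔ p.1 < p.2 := by simp [pairs]

lemma prod_pairs_eq_double {M : Type*} [CommMonoid M] (f : Fin n → Fin n → M) :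
    ∏ p ∈ pairs n, f p.1 p.2 = ∏ i : Fin n, ∏ j ∈ Finset.Ioi i, f i j := by
  rw [Finset.prod_sigma']
  refine Finset.prod_nbij' (fun p => ⟨p.1, p.2⟩) (fun p => (p.1, p.2)) ?_ ?_ ?_ ?_ ?_ <;>
    simp [pairs, Finset.mem_sigma]

/-- symmetrized version of a two-variable function -/
def sp (f : Fin n → Fin n → ℂ) (i j : Fin n) : ℂ := if i < j then f i j else f j i

lemma sp_comm (f : Fin n → Fin n → ℂ) (i j : Fin n) : sp f i j = sp f j i := by
  rcases lt_trichotomy i j with h | h | h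
  · rw [sp, sp, if_pos h, if_neg (asymm h)]
  · subst h; rfl
  · rw [sp, sp, if_neg (asymm h), if_pos h]

lemma prod_sp_perm (f : Fin n → Fin n → ℂ) (σ : Equiv.Perm (Fin n)) :
    ∏ p ∈ pairs n, sp f (σ p.1) (σ p.2) = ∏ p ∈ pairs n, f p.1 p.2 := by
  have hr : ∀ p ∈ pairs n, f p.1 p.2 = sp f p.1 p.2 := fun p hp => by
    rw [sp, if_pos (mem_pairs.1 hp)]
  rw [Finset.prod_congr rfl hr]
  refine Finset.prod_nbij'
    (fun p => if σ p.1 < σ p.2 then (σ p.1, σ p.2) else (σ p.2, σ p.1))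
    (fun p => if σ⁻¹ p.1 < σ⁻¹ p.2 then (σ⁻¹ p.1, σ⁻¹ p.2) else (σ⁻¹ p.2, σ⁻¹ p.1))
    ?_ ?_ ?_ ?_ ?_
  · intro p hp
    have hne : σ p.1 ≠ σ p.2 := fun h => absurd (σ.injective h) (mem_pairs.1 hp).ne
    rcases lt_or_gt_of_ne hne with h | h
    · rw [if_pos h]; exact mem_pairs.2 h
    · rw [if_neg (asymm h)]; exact mem_pairs.2 h
  · intro p hp
    have hne : σ⁻¹ p.1 ≠ σ⁻¹ p.2 := fun h => absurd ((σ⁻¹).injective h) (mem_pairs.1 hp).ne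
    rcases lt_or_gt_of_ne hne with h | h
    · rw [if_pos h]; exact mem_pairs.2 h
    · rw [if_neg (asymm h)]; exact mem_pairs.2 h
  · intro p hp
    have hne : σ p.1 ≠ σ p.2 := fun h => absurd (σ.injective h) (mem_pairs.1 hp).ne
    rcases lt_or_gt_of_ne hne with h | h
    · rw [if_pos h]; simp [mem_pairs.1 hp]
    · rw [if_neg (asymm h)]
      simp only [Equiv.Perm.inv_def, Equiv.symm_apply_apply]
      rw [if_neg (asymm (mem_pairs.1 hp))]
  · intro p hp
    have hne : σ⁻¹ p.1 ≠ σ⁻¹ p.2 := fun h => absurd ((σ⁻¹).injective h) (mem_pairs.1 hp).ne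
    rcases lt_or_gt_of_ne hne with h | h
    · rw [if_pos h]; simp [mem_pairs.1 hp]
    · rw [if_neg (asymm h)]
      simp only [Equiv.Perm.inv_def, Equiv.apply_symm_apply]
      rw [if_neg (asymm (mem_pairs.1 hp))]
  · intro p hp
    have hne : σ p.1 ≠ σ p.2 := fun h => absurd (σ.injective h) (mem_pairs.1 hp).ne
    rcases lt_or_gt_of_ne hne with h | h
    · rw [if_pos h]
    · rw [if_neg (asymm h)]; exact sp_comm f _ _

/-- `(-1)^(number of inversions)` -/
def esign (σ : Equiv.Perm (Fin n)) : ℂ :=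
  ∏ p ∈ pairs n, (if σ p.2 < σ p.1 then (-1 : ℂ) else 1)

lemma vand_perm (w : Fin n → ℂ) (σ : Equiv.Perm (Fin n)) :
    ∏ p ∈ pairs n, (w (σ p.2) - w (σ p.1)) =
      esign σ * ∏ p ∈ pairs n, (w p.2 - w p.1) := by
  have h1 : ∀ p ∈ pairs n, w (σ p.2) - w (σ p.1) =
      (if σ p.2 < σ p.1 then (-1 : ℂ) else 1) * sp (fun i j => w j - w i) (σ p.1) (σ p.2) := by
    intro p hp
    have hne : σ p.1 ≠ σ p.2 := fun h => absurd (σ.injective h) (mem_pairs.1 hp).ne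
    rcases lt_or_gt_of_ne hne with h | h
    · rw [if_neg (asymm h), sp, if_pos h, one_mul]
    · rw [if_pos h, sp, if_neg (asymm h)]; ring
  rw [Finset.prod_congr rfl h1, Finset.prod_mul_distrib, prod_sp_perm]
  rfl

lemma esign_eq_sign (σ : Equiv.Perm (Fin n)) :
    esign σ = ((Equiv.Perm.sign σ : ℤ) : ℂ) := by
  set w : Fin n → ℂ := fun i => ((i : ℕ) : ℂ) with hw
  have hV : (∏ p ∈ pairs n, (w p.2 - w p.1)) ≠ 0 := by
    rw [Finset.prod_ne_zero_iff]
    intro p hp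
    have h : (p.1 : ℕ) < (p.2 : ℕ) := mem_pairs.1 hp
    have hne : ((p.2 : ℕ) : ℂ) ≠ ((p.1 : ℕ) : ℂ) := by exact_mod_cast h.ne'
    simpa [hw, sub_ne_zero] using hne
  have h1 : Matrix.det (Matrix.vandermonde (w ∘ σ)) =
      esign σ * ∏ p ∈ pairs n, (w p.2 - w p.1) := by
    rw [Matrix.det_vandermonde, ← prod_pairs_eq_double (fun i j => (w ∘ σ) j - (w ∘ σ) i)]
    exact vand_perm w σ
  have h2 : Matrix.det (Matrix.vandermonde (w ∘ σ)) =
      ((Equiv.Perm.sign σ : ℤ) : ℂ) * ∏ p ∈ pairs n, (w p.2 - w p.1) := by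
    have hm : Matrix.vandermonde (w ∘ σ) = (Matrix.vandermonde w).submatrix σ id := by
      ext i j; simp [Matrix.vandermonde_apply, Matrix.submatrix]
    rw [hm, Matrix.det_permute, Matrix.det_vandermonde,
      ← prod_pairs_eq_double (fun i j => w j - w i)]
  exact mul_right_cancel₀ hV (h1.symm.trans h2)

end Z6Aux

namespace Z6Aux

/-- cast sign -/
noncomputable def sgn {n : ℕ} (σ : Equiv.Perm (Fin n)) : ℂ := ((Equiv.Perm.sign σ : ℤ) : ℂ)

noncomputable def RP (q : ℂ) {n : ℕ} (v : Fin n → ℂ) (σ : Equiv.Perm (Fin n)) : ℂ :=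
  ∏ p ∈ Finset.univ.filter (fun p : Fin n × Fin n => p.1 < p.2 ∧ σ p.2 < σ p.1),
    (q * v (σ p.1) - q⁻¹ * v (σ p.2)) / (q⁻¹ * v (σ p.1) - q * v (σ p.2))

noncomputable def PP (q : ℂ) {n : ℕ} (u v : Fin n → ℂ) (σ : Equiv.Perm (Fin n)) : ℂ :=
  ∏ p ∈ Finset.univ.filter (fun p : Fin n × Fin n => p.2 < p.1),
    (q * u p.1 - q⁻¹ * v (σ p.2))

noncomputable def QP {n : ℕ} (u v : Fin n → ℂ) (σ : Equiv.Perm (Fin n)) : ℂ :=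
  ∏ p ∈ Finset.univ.filter (fun p : Fin n × Fin n => p.1 < p.2), (u p.1 - v (σ p.2))

noncomputable def TP (q : ℂ) {n : ℕ} (v : Fin n → ℂ) (σ : Equiv.Perm (Fin n)) : ℂ :=
  ∏ p ∈ pairs n, (q⁻¹ * v (σ p.2) - q * v (σ p.1))

lemma z6_def' (q : ℂ) (n : ℕ) (u v : Fin n → ℂ) :
    z6 q n u v = (q - q⁻¹) ^ n * (∏ m, v m) *
      (∏ p ∈ pairs n, ((q⁻¹ * v p.2 - q * v p.1) / (v p.2 - v p.1))) *
      ∑ σ : Equiv.Perm (Fin n), RP q v σ * PP q u v σ * QP u v σ := rfl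

lemma NR (q : ℂ) {n : ℕ} (v : Fin n → ℂ)
    (hgen : ∀ i j : Fin n, i ≠ j → q⁻¹ * v i - q * v j ≠ 0) (σ : Equiv.Perm (Fin n)) :
    (∏ p ∈ pairs n, (q⁻¹ * v p.2 - q * v p.1)) * RP q v σ = sgn σ * TP q v σ := by
  have hfil : Finset.univ.filter (fun p : Fin n × Fin n => p.1 < p.2 ∧ σ p.2 < σ p.1)
      = (pairs n).filter (fun p => σ p.2 < σ p.1) := by
    simp [pairs, Finset.filter_filter]
  rw [RP, hfil, Finset.prod_filter, sgn, ← esign_eq_sign, TP]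
  have hN : (∏ p ∈ pairs n, (q⁻¹ * v p.2 - q * v p.1))
      = ∏ p ∈ pairs n, sp (fun i j => q⁻¹ * v j - q * v i) (σ p.1) (σ p.2) :=
    (prod_sp_perm (fun i j => q⁻¹ * v j - q * v i) σ).symm
  rw [hN, ← Finset.prod_mul_distrib, esign, ← Finset.prod_mul_distrib]
  refine Finset.prod_congr rfl ?_
  intro p hp
  have hlt := mem_pairs.1 hp
  have hne : σ p.1 ≠ σ p.2 := fun h => absurd (σ.injective h) hlt.ne
  rcases lt_or_gt_of_ne hne with h | h
  · rw [sp, if_pos h, if_neg (asymm h), if_neg (asymm h)]; ring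
  · rw [sp, if_neg (asymm h), if_pos h, if_pos h]
    have hd : q⁻¹ * v (σ p.1) - q * v (σ p.2) ≠ 0 := hgen _ _ hne
    rw [mul_comm, div_mul_cancel₀ _ hd]
    ring

lemma z6_eq (q : ℂ) (n : ℕ) (u v : Fin n → ℂ)
    (hgen : ∀ i j : Fin n, i ≠ j → q⁻¹ * v i - q * v j ≠ 0) :
    z6 q n u v = (q - q⁻¹) ^ n * (∏ m, v m) *
      (∏ p ∈ pairs n, (v p.2 - v p.1))⁻¹ *
      ∑ σ : Equiv.Perm (Fin n), sgn σ * (TP q v σ * PP q u v σ * QP u v σ) := by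
  rw [z6_def', Finset.prod_div_distrib, div_eq_mul_inv]
  set N := ∏ p ∈ pairs n, (q⁻¹ * v p.2 - q * v p.1) with hNdef
  have key : ∀ σ : Equiv.Perm (Fin n),
      N * (RP q v σ * PP q u v σ * QP u v σ)
        = sgn σ * (TP q v σ * PP q u v σ * QP u v σ) := by
    intro σ
    calc N * (RP q v σ * PP q u v σ * QP u v σ)
        = (N * RP q v σ) * (PP q u v σ * QP u v σ) := by ring
      _ = (sgn σ * TP q v σ) * (PP q u v σ * QP u v σ) := by rw [NR q v hgen σ]
      _ = sgn σ * (TP q v σ * PP q u v σ * QP u v σ) := by ring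
  have hsum : N * (∑ σ : Equiv.Perm (Fin n), RP q v σ * PP q u v σ * QP u v σ)
      = ∑ σ : Equiv.Perm (Fin n), sgn σ * (TP q v σ * PP q u v σ * QP u v σ) := by
    rw [Finset.mul_sum]
    exact Finset.sum_congr rfl fun σ _ => key σ
  rw [← hsum]
  ring

end Z6Aux

open Z6Aux

/-- `Z^(n)(u;v)` is a polynomial of degree `n-1` in each variable `u_{i₀}` and is
symmetric under permutations of the variables `v_1,...,v_n` (at generic `v`). -/
theorem z6_polynomial_and_symmetric (q : ℂ) (hq : q ≠ 0) (hq2 : q ^ 2 ≠ 1) (n : ℕ)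
    (u v : Fin n → ℂ)
    (hgen : ∀ i j : Fin n, i ≠ j → v i ≠ v j ∧ q⁻¹ * v i - q * v j ≠ 0) :
    (∀ i₀ : Fin n, ∃ p : Polynomial ℂ, p.natDegree ≤ n - 1 ∧
      ∀ w : ℂ, z6 q n (Function.update u i₀ w) v = p.eval w) ∧
    (∀ σ : Equiv.Perm (Fin n), z6 q n u (v ∘ ⇑σ) = z6 q n u v) := by
  classical
  constructor
  · -- polynomial part
    intro i₀
    refine ⟨Polynomial.C ((q - q⁻¹) ^ n * (∏ m, v m) *
        (∏ p ∈ Finset.univ.filter (fun p : Fin n × Fin n => p.1 < p.2),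
          ((q⁻¹ * v p.2 - q * v p.1) / (v p.2 - v p.1)))) *
      ∑ σ : Equiv.Perm (Fin n),
        Polynomial.C (∏ p ∈ Finset.univ.filter
            (fun p : Fin n × Fin n => p.1 < p.2 ∧ σ p.2 < σ p.1),
          (q * v (σ p.1) - q⁻¹ * v (σ p.2)) / (q⁻¹ * v (σ p.1) - q * v (σ p.2))) *
        (∏ p ∈ Finset.univ.filter (fun p : Fin n × Fin n => p.2 < p.1),
          if p.1 = i₀ then (Polynomial.C q * Polynomial.X - Polynomial.C (q⁻¹ * v (σ p.2)))
          else Polynomial.C (q * u p.1 - q⁻¹ * v (σ p.2))) *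
        (∏ p ∈ Finset.univ.filter (fun p : Fin n × Fin n => p.1 < p.2),
          if p.1 = i₀ then (Polynomial.X - Polynomial.C (v (σ p.2)))
          else Polynomial.C (u p.1 - v (σ p.2))), ?_, ?_⟩
    · -- degree bound
      refine le_trans (Polynomial.natDegree_mul_le) ?_
      rw [Polynomial.natDegree_C, zero_add]
      refine Polynomial.natDegree_sum_le_of_forall_le _ _ ?_
      intro σ _
      set A := (Finset.univ.filter (fun p : Fin n × Fin n => p.2 < p.1)).filter
        (fun p => p.1 = i₀) with hA
      set B := (Finset.univ.filter (fun p : Fin n × Fin n => p.1 < p.2)).filter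
        (fun p => p.1 = i₀) with hB
      have hb1 : (∏ p ∈ Finset.univ.filter (fun p : Fin n × Fin n => p.2 < p.1),
          if p.1 = i₀ then (Polynomial.C q * Polynomial.X - Polynomial.C (q⁻¹ * v (σ p.2)))
          else Polynomial.C (q * u p.1 - q⁻¹ * v (σ p.2))).natDegree ≤ A.card := by
        refine le_trans (Polynomial.natDegree_prod_le _ _) ?_
        have : ∀ p ∈ Finset.univ.filter (fun p : Fin n × Fin n => p.2 < p.1),
            (if p.1 = i₀ then (Polynomial.C q * Polynomial.X - Polynomial.C (q⁻¹ * v (σ p.2)))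
            else Polynomial.C (q * u p.1 - q⁻¹ * v (σ p.2))).natDegree
              ≤ (if p.1 = i₀ then 1 else 0) := by
          intro p _
          split_ifs with h
          · refine le_trans (Polynomial.natDegree_sub_le _ _) (max_le ?_ ?_)
            · exact le_trans Polynomial.natDegree_mul_le (by simp)
            · exact le_trans (le_of_eq (Polynomial.natDegree_C _)) (Nat.zero_le _)
          · exact le_of_eq (Polynomial.natDegree_C _)
        refine le_trans (Finset.sum_le_sum this) ?_
        have hsb : (∑ p ∈ Finset.univ.filter (fun p : Fin n × Fin n => p.2 < p.1),
            if p.1 = i₀ then (1 : ℕ) else 0) = A.card := by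
          rw [hA]
          simp [Finset.sum_boole]
        exact le_of_eq hsb
      have hb2 : (∏ p ∈ Finset.univ.filter (fun p : Fin n × Fin n => p.1 < p.2),
          if p.1 = i₀ then (Polynomial.X - Polynomial.C (v (σ p.2)))
          else Polynomial.C (u p.1 - v (σ p.2))).natDegree ≤ B.card := by
        refine le_trans (Polynomial.natDegree_prod_le _ _) ?_
        have : ∀ p ∈ Finset.univ.filter (fun p : Fin n × Fin n => p.1 < p.2),
            (if p.1 = i₀ then (Polynomial.X - Polynomial.C (v (σ p.2)))
            else Polynomial.C (u p.1 - v (σ p.2))).natDegree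
              ≤ (if p.1 = i₀ then 1 else 0) := by
          intro p _
          split_ifs with h
          · refine le_trans (Polynomial.natDegree_sub_le _ _) (max_le ?_ ?_)
            · simp
            · exact le_trans (le_of_eq (Polynomial.natDegree_C _)) (Nat.zero_le _)
          · exact le_of_eq (Polynomial.natDegree_C _)
        refine le_trans (Finset.sum_le_sum this) ?_
        have hsb : (∑ p ∈ Finset.univ.filter (fun p : Fin n × Fin n => p.1 < p.2),
            if p.1 = i₀ then (1 : ℕ) else 0) = B.card := by
          rw [hB]
          simp [Finset.sum_boole]
        exact le_of_eq hsb
      have hcard : A.card + B.card ≤ n - 1 := by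
        have hdisj : Disjoint A B := by
          rw [Finset.disjoint_left]
          intro p hpA hpB
          have h1 : p.2 < p.1 := (Finset.mem_filter.1 (Finset.mem_filter.1 hpA).1).2
          have h2 : p.1 < p.2 := (Finset.mem_filter.1 (Finset.mem_filter.1 hpB).1).2
          exact absurd h2 (asymm h1)
        have hsub : A ∪ B ⊆ (Finset.univ.erase i₀).image (fun j => (i₀, j)) := by
          intro p hp
          rcases Finset.mem_union.1 hp with hp | hp
          · have h1 : p.2 < p.1 := (Finset.mem_filter.1 (Finset.mem_filter.1 hp).1).2
            have h2 : p.1 = i₀ := (Finset.mem_filter.1 hp).2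
            refine Finset.mem_image.2 ⟨p.2, ?_, ?_⟩
            · exact Finset.mem_erase.2 ⟨by rw [← h2]; exact h1.ne, Finset.mem_univ _⟩
            · rw [← h2]
          · have h1 : p.1 < p.2 := (Finset.mem_filter.1 (Finset.mem_filter.1 hp).1).2
            have h2 : p.1 = i₀ := (Finset.mem_filter.1 hp).2
            refine Finset.mem_image.2 ⟨p.2, ?_, ?_⟩
            · exact Finset.mem_erase.2 ⟨by rw [← h2]; exact h1.ne', Finset.mem_univ _⟩
            · rw [← h2]
        have := Finset.card_le_card hsub
        rw [Finset.card_union_of_disjoint hdisj] at this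
        refine le_trans this ?_
        refine le_trans (Finset.card_image_le) ?_
        rw [Finset.card_erase_of_mem (Finset.mem_univ _), Finset.card_univ, Fintype.card_fin]
      calc (Polynomial.C _ * _ * _).natDegree
          ≤ (Polynomial.C _ * _).natDegree + _ := Polynomial.natDegree_mul_le
        _ ≤ (Polynomial.natDegree (Polynomial.C _) + _) + _ :=
            Nat.add_le_add_right Polynomial.natDegree_mul_le _
        _ ≤ A.card + B.card := by
            rw [Polynomial.natDegree_C, zero_add]; exact add_le_add hb1 hb2
        _ ≤ n - 1 := hcard
    · -- evaluation
      intro w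
      have e1 : ∀ (σ : Equiv.Perm (Fin n)),
          (∏ p ∈ Finset.univ.filter (fun p : Fin n × Fin n => p.2 < p.1),
            (q * Function.update u i₀ w p.1 - q⁻¹ * v (σ p.2)))
          = Polynomial.eval w (∏ p ∈ Finset.univ.filter (fun p : Fin n × Fin n => p.2 < p.1),
              if p.1 = i₀ then (Polynomial.C q * Polynomial.X - Polynomial.C (q⁻¹ * v (σ p.2)))
              else Polynomial.C (q * u p.1 - q⁻¹ * v (σ p.2))) := by
        intro σ
        rw [Polynomial.eval_prod]
        refine Finset.prod_congr rfl fun p _ => ?_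
        rw [Function.update_apply]
        split_ifs with h <;> simp
      have e2 : ∀ (σ : Equiv.Perm (Fin n)),
          (∏ p ∈ Finset.univ.filter (fun p : Fin n × Fin n => p.1 < p.2),
            (Function.update u i₀ w p.1 - v (σ p.2)))
          = Polynomial.eval w (∏ p ∈ Finset.univ.filter (fun p : Fin n × Fin n => p.1 < p.2),
              if p.1 = i₀ then (Polynomial.X - Polynomial.C (v (σ p.2)))
              else Polynomial.C (u p.1 - v (σ p.2))) := by
        intro σ
        rw [Polynomial.eval_prod]
        refine Finset.prod_congr rfl fun p _ => ?_
        rw [Function.update_apply]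
        split_ifs with h <;> simp
      rw [Polynomial.eval_mul, Polynomial.eval_C, Polynomial.eval_finset_sum]
      unfold z6
      congr 1
      refine Finset.sum_congr rfl fun σ _ => ?_
      rw [Polynomial.eval_mul, Polynomial.eval_mul, Polynomial.eval_C, e1 σ, e2 σ]
  · -- symmetry part
    intro τ
    have hg : ∀ i j : Fin n, i ≠ j → q⁻¹ * v i - q * v j ≠ 0 := fun i j h => (hgen i j h).2
    have hg' : ∀ i j : Fin n, i ≠ j → q⁻¹ * (v ∘ ⇑τ) i - q * (v ∘ ⇑τ) j ≠ 0 := by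
      intro i j h
      exact hg _ _ fun hh => h (τ.injective hh)
    rw [z6_eq q n u v hg, z6_eq q n u (v ∘ ⇑τ) hg']
    set s := sgn τ with hs
    have hss : s * s = 1 := by
      rcases Int.units_eq_one_or (Equiv.Perm.sign τ) with h | h <;> simp [hs, sgn, h]
    have hsinv : s⁻¹ = s := by
      rw [inv_eq_of_mul_eq_one_right hss]
    have hsgnmul : ∀ σ : Equiv.Perm (Fin n), sgn (τ * σ) = s * sgn σ := by
      intro σ
      rw [hs, sgn, sgn, sgn, Equiv.Perm.sign_mul]
      push_cast
      ring
    have h1 : (∏ m, (v ∘ ⇑τ) m) = ∏ m, v m := Equiv.prod_comp τ v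
    have h2 : ∏ p ∈ pairs n, ((v ∘ ⇑τ) p.2 - (v ∘ ⇑τ) p.1)
        = s * ∏ p ∈ pairs n, (v p.2 - v p.1) := by
      have := vand_perm v τ
      rw [esign_eq_sign] at this
      simpa [Function.comp, hs, sgn] using this
    have h3 : ∀ σ, TP q (v ∘ ⇑τ) σ = TP q v (τ * σ) := by
      intro σ; simp [TP, Equiv.Perm.mul_apply]
    have h4 : ∀ σ, PP q u (v ∘ ⇑τ) σ = PP q u v (τ * σ) := by
      intro σ; simp [PP, Equiv.Perm.mul_apply]
    have h5 : ∀ σ, QP u (v ∘ ⇑τ) σ = QP u v (τ * σ) := by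
      intro σ; simp [QP, Equiv.Perm.mul_apply]
    have hsum : (∑ σ : Equiv.Perm (Fin n),
          sgn σ * (TP q (v ∘ ⇑τ) σ * PP q u (v ∘ ⇑τ) σ * QP u (v ∘ ⇑τ) σ))
        = s * ∑ σ : Equiv.Perm (Fin n), sgn σ * (TP q v σ * PP q u v σ * QP u v σ) := by
      calc (∑ σ : Equiv.Perm (Fin n),
            sgn σ * (TP q (v ∘ ⇑τ) σ * PP q u (v ∘ ⇑τ) σ * QP u (v ∘ ⇑τ) σ))
          = ∑ σ : Equiv.Perm (Fin n),
            s * (sgn (τ * σ) * (TP q v (τ * σ) * PP q u v (τ * σ) * QP u v (τ * σ))) := by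
            refine Finset.sum_congr rfl fun σ _ => ?_
            rw [h3 σ, h4 σ, h5 σ, hsgnmul σ]
            linear_combination
              (-(sgn σ * (TP q v (τ * σ) * PP q u v (τ * σ) * QP u v (τ * σ)))) * hss
        _ = s * ∑ σ : Equiv.Perm (Fin n),
            sgn (τ * σ) * (TP q v (τ * σ) * PP q u v (τ * σ) * QP u v (τ * σ)) := by
            rw [← Finset.mul_sum]
        _ = s * ∑ σ : Equiv.Perm (Fin n), sgn σ * (TP q v σ * PP q u v σ * QP u v σ) := by
            congr 1
            exact Fintype.sum_equiv (Equiv.mulLeft τ)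
              (fun σ => sgn (τ * σ) * (TP q v (τ * σ) * PP q u v (τ * σ) * QP u v (τ * σ)))
              (fun σ => sgn σ * (TP q v σ * PP q u v σ * QP u v σ)) (fun σ => rfl)
    rw [h1, h2, hsum]
    rw [mul_inv, hsinv]
    calc (q - q⁻¹) ^ n * (∏ m, v m) * (s * (∏ p ∈ pairs n, (v p.2 - v p.1))⁻¹) *
          (s * ∑ σ : Equiv.Perm (Fin n), sgn σ * (TP q v σ * PP q u v σ * QP u v σ))
        = (s * s) * ((q - q⁻¹) ^ n * (∏ m, v m) * (∏ p ∈ pairs n, (v p.2 - v p.1))⁻¹ *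
          ∑ σ : Equiv.Perm (Fin n), sgn σ * (TP q v σ * PP q u v σ * QP u v σ)) := by ring
      _ = _ := by rw [hss, one_mul]
end
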